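/- arXiv:1007.1039 — 4 statements merged into one kernel-verified Lean document; each statement's English description precedes it below -/
import Mathlib

section
/- For every n ≥ 1, the characteristic polynomial of −Q^{(n)} has n distinct roots, all of which are real and strictly positive; that is, −Q^{(n)} has n distinct positive real eigenvalues λ_1^{(n)} < λ_2^{(n)} < ⋯ < λ_n^{(n)}. -/
open Polynomial in
/-- The generator `Q^(n)` of the birth–death chain on `{0,…,n}` absorbed at `n`,
restricted to the transient states `{0,…,n-1}`. -/
noncomputable def bdMatrix (a b : ℕ → ℝ) (n : ℕ) : Matrix (Fin n) (Fin n) ℝ :=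
  fun i j =>
    if (j : ℕ) = (i : ℕ) + 1 then b i
    else if (i : ℕ) = (j : ℕ) + 1 then a i
    else if (i : ℕ) = (j : ℕ) then
      (if (i : ℕ) = 0 then -(b 0) else -(a i + b i))
    else 0

namespace BDproof

open Polynomial Matrix

/-- Characteristic polynomials are invariant under conjugation by a unit. -/
lemma my_charpoly_conj_units {n R : Type*} [Fintype n] [DecidableEq n] [CommRing R]
    (P : (Matrix n n R)ˣ) (A : Matrix n n R) :
    ((P : Matrix n n R) * A * (↑P⁻¹ : Matrix n n R)).charpoly = A.charpoly := by
  set f : Matrix n n R →+* Matrix n n R[X] := (C : R →+* R[X]).mapMatrix with hf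
  have hfPP : f (P : Matrix n n R) * f (↑P⁻¹ : Matrix n n R) = 1 := by
    rw [← _root_.map_mul, P.mul_inv, _root_.map_one]
  have key : charmatrix ((P : Matrix n n R) * A * (↑P⁻¹ : Matrix n n R))
      = f (P : Matrix n n R) * charmatrix A * f (↑P⁻¹ : Matrix n n R) := by
    show Matrix.scalar n (X : R[X]) - f ((P : Matrix n n R) * A * (↑P⁻¹ : Matrix n n R))
      = f (P : Matrix n n R) * (Matrix.scalar n (X : R[X]) - f A) * f (↑P⁻¹ : Matrix n n R)
    rw [_root_.map_mul, _root_.map_mul, mul_sub, sub_mul]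
    congr 1
    rw [← (Matrix.scalar_commute (X : R[X]) (fun r => Commute.all _ _)
      (f (P : Matrix n n R))).eq, mul_assoc, hfPP, mul_one]
  rw [Matrix.charpoly, key, det_mul, det_mul, Matrix.charpoly, mul_right_comm,
    ← det_mul, hfPP, det_one, one_mul]

lemma my_charpoly_diagonal {n : Type*} [Fintype n] [DecidableEq n] {R : Type*} [CommRing R]
    (v : n → R) : (diagonal v).charpoly = ∏ i, (X - C (v i)) := by
  have h : charmatrix (diagonal v) = diagonal (fun i => X - C (v i)) := by
    ext i j
    by_cases h : i = j
    · subst h; simp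
    · rw [charmatrix_apply_ne _ _ _ h, diagonal_apply_ne _ h, diagonal_apply_ne _ h,
        map_zero, neg_zero]
  rw [Matrix.charpoly, h, det_diagonal]

/-- The conjugating diagonal entries. -/
noncomputable def dv (a b : ℕ → ℝ) : ℕ → ℝ
  | 0 => 1
  | i + 1 => dv a b i * Real.sqrt (a (i + 1) / b i)

variable {a b : ℕ → ℝ}

lemma dv_pos (ha : ∀ i, 1 ≤ i → 0 < a i) (hb : ∀ i, 0 < b i) : ∀ i, 0 < dv a b i
  | 0 => one_pos
  | i + 1 => mul_pos (dv_pos ha hb i)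
      (Real.sqrt_pos.2 (div_pos (ha (i+1) (Nat.succ_le_succ (Nat.zero_le _))) (hb i)))

/-- The symmetrized tridiagonal matrix conjugate to `-Q^(n)`. -/
noncomputable def Smat (a b : ℕ → ℝ) (n : ℕ) : Matrix (Fin n) (Fin n) ℝ :=
  fun i j =>
    if (j : ℕ) = (i : ℕ) + 1 then -Real.sqrt (a ((i : ℕ) + 1) * b (i : ℕ))
    else if (i : ℕ) = (j : ℕ) + 1 then -Real.sqrt (a (i : ℕ) * b (j : ℕ))
    else if (i : ℕ) = (j : ℕ) then
      (if (i : ℕ) = 0 then b 0 else a (i : ℕ) + b (i : ℕ))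
    else 0

/-- The bidiagonal "Cholesky factor" of `Smat`. -/
noncomputable def Lmat (a b : ℕ → ℝ) (n : ℕ) : Matrix (Fin n) (Fin n) ℝ :=
  fun i j =>
    if (j : ℕ) = (i : ℕ) then Real.sqrt (b (i : ℕ))
    else if (j : ℕ) = (i : ℕ) + 1 then -Real.sqrt (a ((i : ℕ) + 1))
    else 0

lemma conj_eq (ha : ∀ i, 1 ≤ i → 0 < a i) (hb : ∀ i, 0 < b i) (n : ℕ) :
    diagonal (fun i : Fin n => dv a b (i : ℕ)) * Smat a b n
      = (-(bdMatrix a b n)) * diagonal (fun i : Fin n => dv a b (i : ℕ)) := by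
  ext i j
  rw [diagonal_mul, mul_diagonal, neg_apply]
  unfold Smat bdMatrix
  by_cases h1 : (j : ℕ) = (i : ℕ) + 1
  · rw [if_pos h1, if_pos h1, h1]
    have hap := ha ((i:ℕ)+1) (Nat.succ_le_succ (Nat.zero_le _))
    have hbp := hb (i:ℕ)
    show dv a b (i:ℕ) * -Real.sqrt (a ((i:ℕ)+1) * b (i:ℕ))
      = -(b (i:ℕ)) * (dv a b (i:ℕ) * Real.sqrt (a ((i:ℕ)+1) / b (i:ℕ)))
    have : Real.sqrt (a ((i:ℕ)+1) * b (i:ℕ))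
        = b (i:ℕ) * Real.sqrt (a ((i:ℕ)+1) / b (i:ℕ)) := by
      rw [show a ((i:ℕ)+1) * b (i:ℕ) = (b (i:ℕ))^2 * (a ((i:ℕ)+1) / b (i:ℕ)) by
        field_simp]
      rw [Real.sqrt_mul (sq_nonneg _), Real.sqrt_sq hbp.le]
    rw [this]; ring
  · rw [if_neg h1, if_neg h1]
    by_cases h2 : (i : ℕ) = (j : ℕ) + 1
    · rw [if_pos h2, if_pos h2, h2]
      have hap := ha ((j:ℕ)+1) (Nat.succ_le_succ (Nat.zero_le _))
      have hbp := hb (j:ℕ)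
      show dv a b ((j:ℕ)+1) * -Real.sqrt (a ((j:ℕ)+1) * b (j:ℕ))
        = -(a ((j:ℕ)+1)) * dv a b (j:ℕ)
      show dv a b (j:ℕ) * Real.sqrt (a ((j:ℕ)+1) / b (j:ℕ))
          * -Real.sqrt (a ((j:ℕ)+1) * b (j:ℕ)) = -(a ((j:ℕ)+1)) * dv a b (j:ℕ)
      have : Real.sqrt (a ((j:ℕ)+1) / b (j:ℕ)) * Real.sqrt (a ((j:ℕ)+1) * b (j:ℕ))
          = a ((j:ℕ)+1) := by
        rw [← Real.sqrt_mul (div_nonneg hap.le hbp.le)]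
        rw [show a ((j:ℕ)+1) / b (j:ℕ) * (a ((j:ℕ)+1) * b (j:ℕ)) = (a ((j:ℕ)+1))^2 by
          field_simp]
        exact Real.sqrt_sq hap.le
      calc dv a b (j:ℕ) * Real.sqrt (a ((j:ℕ)+1) / b (j:ℕ))
            * -Real.sqrt (a ((j:ℕ)+1) * b (j:ℕ))
          = -(dv a b (j:ℕ) * (Real.sqrt (a ((j:ℕ)+1) / b (j:ℕ))
            * Real.sqrt (a ((j:ℕ)+1) * b (j:ℕ)))) := by ring
        _ = -(a ((j:ℕ)+1)) * dv a b (j:ℕ) := by rw [this]; ring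
    · rw [if_neg h2, if_neg h2]
      by_cases h3 : (i : ℕ) = (j : ℕ)
      · rw [if_pos h3, if_pos h3]
        have : i = j := Fin.ext h3
        subst this
        by_cases h4 : (i : ℕ) = 0 <;> simp [h4] <;> ring
      · rw [if_neg h3, if_neg h3, mul_zero, neg_zero, zero_mul]

lemma Lmat_apply_of_ne (n : ℕ) (i j : Fin n) (h1 : (j:ℕ) ≠ (i:ℕ)) (h2 : (j:ℕ) ≠ (i:ℕ)+1) :
    Lmat a b n i j = 0 := by
  unfold Lmat; rw [if_neg h1, if_neg h2]

lemma S_eq_LHL (ha : ∀ i, 1 ≤ i → 0 < a i) (hb : ∀ i, 0 < b i) (n : ℕ) :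
    Smat a b n = (Lmat a b n)ᴴ * Lmat a b n := by
  ext i j
  rw [mul_apply]
  have hconj : ∀ k l : Fin n, (Lmat a b n)ᴴ k l = Lmat a b n l k := by
    intro k l; rw [conjTranspose_apply, star_trivial]
  simp only [hconj]
  unfold Smat
  by_cases h1 : (j : ℕ) = (i : ℕ) + 1
  · rw [if_pos h1]
    rw [Finset.sum_eq_single_of_mem i (Finset.mem_univ _) ?_]
    · unfold Lmat
      rw [if_pos rfl, if_neg (by omega), if_pos h1]
      rw [Real.sqrt_mul (ha _ (Nat.succ_le_succ (Nat.zero_le _))).le]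
      ring
    · intro k _ hk
      have hk' : (k:ℕ) ≠ (i:ℕ) := fun h => hk (Fin.ext h)
      rcases eq_or_ne ((i:ℕ)) ((k:ℕ)+1) with h | h
      · rw [Lmat_apply_of_ne n k j (by omega) (by omega), mul_zero]
      · rw [Lmat_apply_of_ne n k i (by omega) (by omega), zero_mul]
  · rw [if_neg h1]
    by_cases h2 : (i : ℕ) = (j : ℕ) + 1
    · rw [if_pos h2]
      rw [Finset.sum_eq_single_of_mem j (Finset.mem_univ _) ?_]
      · unfold Lmat
        rw [if_neg (by omega), if_pos (by omega), if_pos rfl]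
        rw [show a (i:ℕ) * b (j:ℕ) = a ((j:ℕ)+1) * b (j:ℕ) by rw [← h2]]
        rw [Real.sqrt_mul (ha _ (Nat.succ_le_succ (Nat.zero_le _))).le]
        ring
      · intro k _ hk
        have hk' : (k:ℕ) ≠ (j:ℕ) := fun h => hk (Fin.ext h)
        rcases eq_or_ne ((i:ℕ)) ((k:ℕ)) with h | h
        · rw [Lmat_apply_of_ne n k j (by omega) (by omega), mul_zero]
        · rw [Lmat_apply_of_ne n k i (by omega) (by omega), zero_mul]
    · by_cases h3 : (i : ℕ) = (j : ℕ)
      · have hij : i = j := Fin.ext h3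
        subst hij
        rw [if_neg h2, if_pos rfl]
        by_cases h4 : (i : ℕ) = 0
        · rw [if_pos h4]
          rw [Finset.sum_eq_single_of_mem i (Finset.mem_univ _) ?_]
          · unfold Lmat
            rw [if_pos rfl, Real.mul_self_sqrt (hb _).le, h4]
          · intro k _ hk
            have hk' : (k:ℕ) ≠ (i:ℕ) := fun h => hk (Fin.ext h)
            rw [Lmat_apply_of_ne n k i (by omega) (by omega), zero_mul]
        · rw [if_neg h4]
          obtain ⟨m, hm⟩ : ∃ m, (i:ℕ) = m + 1 := ⟨(i:ℕ)-1, by omega⟩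
          have hmlt : m < n := by omega
          set k0 : Fin n := ⟨m, hmlt⟩ with hk0
          have hk0v : (k0:ℕ) = m := rfl
          have hk0i : k0 ≠ i := by
            intro h
            have := congrArg (Fin.val) h
            omega
          have hsum : ∀ k ∈ Finset.univ, k ∉ ({k0, i} : Finset (Fin n)) →
              Lmat a b n k i * Lmat a b n k i = 0 := by
            intro k _ hk
            simp only [Finset.mem_insert, Finset.mem_singleton] at hk
            push_neg at hk
            have h5 : (k:ℕ) ≠ m := fun h => hk.1 (Fin.ext (by omega))
            have h6 : (k:ℕ) ≠ (i:ℕ) := fun h => hk.2 (Fin.ext h)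
            rw [Lmat_apply_of_ne n k i (by omega) (by omega), zero_mul]
          rw [← Finset.sum_subset (Finset.subset_univ ({k0, i} : Finset (Fin n)))
            (fun k _ hk => hsum k (Finset.mem_univ k) hk)]
          rw [Finset.sum_pair hk0i]
          have hL1 : Lmat a b n k0 i = -Real.sqrt (a (i:ℕ)) := by
            unfold Lmat
            rw [if_neg (by omega), if_pos (by omega), hk0v, show m + 1 = (i:ℕ) by omega]
          have hL2 : Lmat a b n i i = Real.sqrt (b (i:ℕ)) := by
            unfold Lmat
            rw [if_pos rfl]
          rw [hL1, hL2, neg_mul_neg, Real.mul_self_sqrt (ha _ (by omega)).le,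
            Real.mul_self_sqrt (hb _).le]
      · rw [if_neg h2, if_neg h3]
        symm
        apply Finset.sum_eq_zero
        intro k _
        rcases eq_or_ne ((i:ℕ)) ((k:ℕ)) with h | h
        · rw [Lmat_apply_of_ne n k j (by omega) (by omega), mul_zero]
        · rcases eq_or_ne ((i:ℕ)) ((k:ℕ)+1) with h' | h'
          · rw [Lmat_apply_of_ne n k j (by omega) (by omega), mul_zero]
          · rw [Lmat_apply_of_ne n k i (by omega) (by omega), zero_mul]

lemma Lmat_det_isUnit (hb : ∀ i, 0 < b i) (n : ℕ) : IsUnit (Lmat a b n).det := by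
  have htri : (Lmat a b n).BlockTriangular id := by
    intro i j hij
    unfold Lmat
    rw [if_neg (by simp at hij ⊢; omega), if_neg (by simp at hij ⊢; omega)]
  rw [det_of_upperTriangular htri]
  refine isUnit_iff_ne_zero.2 (ne_of_gt (Finset.prod_pos ?_))
  intro i _
  have : Lmat a b n i i = Real.sqrt (b (i:ℕ)) := by unfold Lmat; rw [if_pos rfl]
  rw [this]
  exact Real.sqrt_pos.2 (hb _)

lemma posdef_of_LHL {n : ℕ} {S L : Matrix (Fin n) (Fin n) ℝ} (hS : S = Lᴴ * L)
    (hL : IsUnit L.det) : S.PosDef := by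
  subst hS
  refine PosDef.of_dotProduct_mulVec_pos (isHermitian_conjTranspose_mul_self L) (fun x hx => ?_)
  rw [← mulVec_mulVec, dotProduct_mulVec, vecMul_conjTranspose, star_star]
  have hLx : L *ᵥ x ≠ 0 := by
    intro h
    apply hx
    have hinj := (Matrix.mulVec_injective_iff_isUnit).2 ((Matrix.isUnit_iff_isUnit_det L).2 hL)
    exact hinj (h.trans (Matrix.mulVec_zero L).symm)
  exact Matrix.dotProduct_star_self_pos_iff.2 hLx

/-- An eigenvector of the symmetrized tridiagonal matrix vanishing at index 0 is zero. -/
lemma eigvec_eq_zero (ha : ∀ i, 1 ≤ i → 0 < a i) (hb : ∀ i, 0 < b i)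
    {n : ℕ} (hn : 0 < n) {lam : ℝ} {u : Fin n → ℝ}
    (hu : Smat a b n *ᵥ u = lam • u) (h0 : u ⟨0, hn⟩ = 0) : u = 0 := by
  have key : ∀ k, ∀ hk : k < n, u ⟨k, hk⟩ = 0 := by
    intro k
    induction k using Nat.strong_induction_on with
    | _ k IH =>
      intro hk
      match k, IH with
      | 0, _ => exact h0
      | (m+1), IH =>
        have hm : m < n := by omega
        have hum : u ⟨m, hm⟩ = 0 := IH m (by omega) hm
        have hrow := congrFun hu ⟨m, hm⟩
        simp only [Matrix.mulVec, dotProduct, Pi.smul_apply, smul_eq_mul] at hrow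
        have hsum : ∑ j, Smat a b n ⟨m, hm⟩ j * u j
            = Smat a b n ⟨m, hm⟩ ⟨m+1, hk⟩ * u ⟨m+1, hk⟩ := by
          refine Finset.sum_eq_single_of_mem (f := fun j => Smat a b n ⟨m, hm⟩ j * u j)
            ⟨m+1, hk⟩ (Finset.mem_univ _) ?_
          intro j _ hj
          show Smat a b n ⟨m, hm⟩ j * u j = 0
          have hjv : (j : ℕ) ≠ m + 1 := fun h => hj (Fin.ext h)
          rcases le_or_gt (j : ℕ) m with hle | hgt
          · have huj : u j = 0 := by
              have := IH (j : ℕ) (by omega) j.2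
              rwa [Fin.eta] at this
            rw [huj, mul_zero]
          · have hent : Smat a b n ⟨m, hm⟩ j = 0 := by
              unfold Smat
              rw [if_neg (by simp; omega), if_neg (by simp; omega), if_neg (by simp; omega)]
            rw [hent, zero_mul]
        rw [hsum, hum, mul_zero] at hrow
        have hSent : Smat a b n ⟨m, hm⟩ ⟨m+1, hk⟩
            = -Real.sqrt (a (m+1) * b m) := by
          unfold Smat
          rw [if_pos (by simp)]
        rw [hSent] at hrow
        have hpos : 0 < Real.sqrt (a (m+1) * b m) :=
          Real.sqrt_pos.2 (mul_pos (ha _ (by omega)) (hb _))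
        rcases mul_eq_zero.1 hrow with h | h
        · exact absurd h (neg_ne_zero.2 hpos.ne')
        · exact h
  funext x
  have := key (x : ℕ) x.2
  rwa [Fin.eta] at this

lemma eigenvalues_injective (ha : ∀ i, 1 ≤ i → 0 < a i) (hb : ∀ i, 0 < b i)
    {n : ℕ} (hn : 0 < n) (hS : (Smat a b n).IsHermitian) :
    Function.Injective hS.eigenvalues := by
  intro i j hij
  by_contra hne
  set B := hS.eigenvectorBasis with hB
  set v : Fin n → ℝ := ⇑(B i) with hv'
  set w : Fin n → ℝ := ⇑(B j) with hw'
  have hv : Smat a b n *ᵥ v = hS.eigenvalues i • v := hS.mulVec_eigenvectorBasis i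
  have hw : Smat a b n *ᵥ w = hS.eigenvalues j • w := hS.mulVec_eigenvectorBasis j
  have horm := orthonormal_iff_ite.1 (B.orthonormal)
  have hinner : ∀ p q : Fin n, (inner ℝ (B p) (B q) : ℝ) = ∑ k, (B p) k * (B q) k := by
    intro p q
    rw [PiLp.inner_apply]
    simp [RCLike.inner_apply, starRingEnd_apply, star_trivial, mul_comm]
  have h1 : ∑ k, v k * v k = 1 := by
    have h := horm i i
    rw [hinner i i] at h
    simpa using h
  have h3 : ∑ k, w k * w k = 1 := by
    have h := horm j j
    rw [hinner j j] at h
    simpa using h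
  have h2 : ∑ k, v k * w k = 0 := by
    have h := horm i j
    rw [hinner i j, if_neg hne] at h
    exact h
  set i0 : Fin n := ⟨0, hn⟩ with hi0
  set c1 := v i0 with hc1
  set c2 := w i0 with hc2
  set uu : Fin n → ℝ := fun k => c1 * w k - c2 * v k with huu
  have huu_eig : Smat a b n *ᵥ uu = hS.eigenvalues i • uu := by
    funext k
    have hvk := congrFun hv k
    have hwk := congrFun hw k
    simp only [Matrix.mulVec, dotProduct, Pi.smul_apply, smul_eq_mul] at hvk hwk ⊢
    have : ∑ l, Smat a b n k l * uu l
        = c1 * (∑ l, Smat a b n k l * w l) - c2 * (∑ l, Smat a b n k l * v l) := by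
      rw [Finset.mul_sum, Finset.mul_sum, ← Finset.sum_sub_distrib]
      apply Finset.sum_congr rfl
      intro l _
      simp only [huu]
      ring
    rw [this, hvk, hwk, hij]
    simp only [huu]
    ring
  have huu0 : uu = 0 := by
    apply eigvec_eq_zero ha hb hn huu_eig
    simp only [huu, hi0]
    show c1 * c2 - c2 * c1 = 0
    ring
  have hv0 : c1 ≠ 0 := by
    intro h
    have hvz : v = 0 := eigvec_eq_zero ha hb hn hv h
    rw [hvz] at h1
    simp at h1
  have hw0 : c2 ≠ 0 := by
    intro h
    have hwz : w = 0 := eigvec_eq_zero ha hb hn hw h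
    rw [hwz] at h3
    simp at h3
  have hz : ∀ k, c1 * w k = c2 * v k := by
    intro k
    have := congrFun huu0 k
    simp only [huu, Pi.zero_apply] at this
    linarith
  have e1 : c1 * (∑ k, v k * w k) = c2 * (∑ k, v k * v k) := by
    rw [Finset.mul_sum, Finset.mul_sum]
    apply Finset.sum_congr rfl
    intro k _
    linear_combination v k * hz k
  rw [h1, h2, mul_zero, mul_one] at e1
  exact hw0 e1.symm

lemma charpoly_hermitian_eq_prod {n : ℕ} (S : Matrix (Fin n) (Fin n) ℝ)
    (hS : S.IsHermitian) :
    S.charpoly = ∏ i : Fin n, (X - C (hS.eigenvalues i)) := by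
  have hsp := hS.spectral_theorem
  set U : Matrix (Fin n) (Fin n) ℝ :=
    (Matrix.IsHermitian.eigenvectorUnitary hS : Matrix (Fin n) (Fin n) ℝ) with hU
  have h1 : U * star U = 1 :=
    Matrix.mem_unitaryGroup_iff.mp (Matrix.IsHermitian.eigenvectorUnitary hS).2
  have h2 : star U * U = 1 :=
    Matrix.mem_unitaryGroup_iff'.mp (Matrix.IsHermitian.eigenvectorUnitary hS).2
  set P : (Matrix (Fin n) (Fin n) ℝ)ˣ := ⟨U, star U, h1, h2⟩ with hP
  have hofr : (RCLike.ofReal ∘ hS.eigenvalues : Fin n → ℝ) = hS.eigenvalues := by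
    funext k
    simp [RCLike.ofReal_real_eq_id]
  calc S.charpoly
      = ((P : Matrix (Fin n) (Fin n) ℝ) * diagonal (RCLike.ofReal ∘ hS.eigenvalues)
          * (↑P⁻¹ : Matrix (Fin n) (Fin n) ℝ)).charpoly := by
        show S.charpoly
          = (U * diagonal (RCLike.ofReal ∘ hS.eigenvalues) * star U).charpoly
        exact congrArg Matrix.charpoly hsp
    _ = (diagonal (RCLike.ofReal ∘ hS.eigenvalues) : Matrix (Fin n) (Fin n) ℝ).charpoly :=
        my_charpoly_conj_units P _
    _ = ∏ i : Fin n, (X - C (hS.eigenvalues i)) := by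
        rw [hofr]
        exact my_charpoly_diagonal _

lemma sorted_exists {n : ℕ} (eig : Fin n → ℝ) (hinj : Function.Injective eig)
    (hpos : ∀ i, 0 < eig i) :
    ∃ lam : Fin n → ℝ, StrictMono lam ∧ (∀ ν, 0 < lam ν) ∧
      ∏ ν : Fin n, (X - C (lam ν)) = ∏ i : Fin n, (X - C (eig i)) := by
  set s : Finset ℝ := Finset.image eig Finset.univ with hs
  have hcard : s.card = n := by
    rw [hs, Finset.card_image_of_injective _ hinj, Finset.card_univ, Fintype.card_fin]
  set iso := s.orderIsoOfFin hcard with hiso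
  refine ⟨fun ν => (iso ν : ℝ), ?_, ?_, ?_⟩
  · intro x y hxy
    exact_mod_cast iso.strictMono hxy
  · intro ν
    have hmem : (iso ν : ℝ) ∈ s := (iso ν).2
    obtain ⟨i, _, hi⟩ := Finset.mem_image.1
      (show ((iso ν : ℝ)) ∈ Finset.image eig Finset.univ from hmem)
    exact lt_of_lt_of_eq (hpos i) hi
  · calc ∏ ν : Fin n, (X - C ((iso ν : ℝ)))
        = ∏ x : {x // x ∈ s}, (X - C (x : ℝ)) := by
          exact Equiv.prod_comp iso.toEquiv (fun x => X - C (x : ℝ))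
      _ = ∏ x ∈ s, (X - C x) := Finset.prod_coe_sort s (fun x => X - C x)
      _ = ∏ i : Fin n, (X - C (eig i)) := Finset.prod_image (fun x _ y _ h => hinj h)

end BDproof

open BDproof Matrix

/-- for every `n ≥ 1`, the characteristic polynomial of `-Q^(n)` has `n`
distinct real roots, all strictly positive. -/
theorem bdMatrix_eigenvalues_real_distinct_positive
    (a b : ℕ → ℝ) (ha : ∀ i, 1 ≤ i → 0 < a i) (hb : ∀ i, 0 < b i)
    (n : ℕ) (hn : 1 ≤ n) :
    ∃ lam : Fin n → ℝ, StrictMono lam ∧ (∀ ν, 0 < lam ν) ∧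
      (-(bdMatrix a b n)).charpoly =
        ∏ ν : Fin n, (Polynomial.X - Polynomial.C (lam ν)) := by
  have hn0 : 0 < n := hn
  have hSfac := S_eq_LHL (a := a) (b := b) ha hb n
  have hPD : (Smat a b n).PosDef := posdef_of_LHL hSfac (Lmat_det_isUnit hb n)
  have hS : (Smat a b n).IsHermitian := hPD.isHermitian
  have hinj : Function.Injective hS.eigenvalues := eigenvalues_injective ha hb hn0 hS
  have hpos : ∀ i, 0 < hS.eigenvalues i := fun i => hPD.eigenvalues_pos i
  -- charpoly of -Q equals charpoly of S
  have hdne : ∀ i : Fin n, dv a b (i : ℕ) ≠ 0 := fun i => (dv_pos ha hb _).ne'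
  have hx : diagonal (fun i : Fin n => dv a b (i : ℕ))
      * diagonal (fun i : Fin n => (dv a b (i : ℕ))⁻¹) = 1 := by
    rw [diagonal_mul_diagonal]
    rw [show (fun i : Fin n => dv a b (i : ℕ) * (dv a b (i : ℕ))⁻¹) = fun _ => (1:ℝ) from
      funext fun i => mul_inv_cancel₀ (hdne i), diagonal_one]
  have hy : diagonal (fun i : Fin n => (dv a b (i : ℕ))⁻¹)
      * diagonal (fun i : Fin n => dv a b (i : ℕ)) = 1 := by
    rw [diagonal_mul_diagonal]
    rw [show (fun i : Fin n => (dv a b (i : ℕ))⁻¹ * dv a b (i : ℕ)) = fun _ => (1:ℝ) from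
      funext fun i => inv_mul_cancel₀ (hdne i), diagonal_one]
  set P : (Matrix (Fin n) (Fin n) ℝ)ˣ :=
    ⟨diagonal (fun i : Fin n => dv a b (i : ℕ)),
     diagonal (fun i : Fin n => (dv a b (i : ℕ))⁻¹), hx, hy⟩ with hP
  have hMS : -(bdMatrix a b n) = (P : Matrix (Fin n) (Fin n) ℝ) * Smat a b n
      * (↑P⁻¹ : Matrix (Fin n) (Fin n) ℝ) := by
    have hc := conj_eq (a := a) (b := b) ha hb n
    show -(bdMatrix a b n)
      = diagonal (fun i : Fin n => dv a b (i : ℕ)) * Smat a b n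
        * diagonal (fun i : Fin n => (dv a b (i : ℕ))⁻¹)
    rw [hc, mul_assoc, hx, mul_one]
  have hchar1 : (-(bdMatrix a b n)).charpoly = (Smat a b n).charpoly := by
    rw [hMS]
    exact my_charpoly_conj_units P _
  have hchar2 := charpoly_hermitian_eq_prod (Smat a b n) hS
  obtain ⟨lam, hmono, hlpos, hprod⟩ := sorted_exists hS.eigenvalues hinj hpos
  exact ⟨lam, hmono, hlpos, by rw [hchar1, hchar2, ← hprod]⟩
end

section
/- For all integers 0 ≤ n < N, the matrix −Q̂_n^{(N)} is invertible and the trace of its inverse equals Σ_{j=n}^{N} (1/(μ_j b_j)) Σ_{i=j+1}^{N} μ_i. Equivalently, the sum of the reciprocals of the eigenvalues of −Q̂_n^{(N)} equals Σ_{j=n}^{N} (1/(μ_j b_j)) Σ_{i=j+1}^{N} μ_i (which is the expected hitting time E T_{N,n} of state n from state N). -/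
/-- `μ_0 = 1`, `μ_i = (b_0 ⋯ b_{i-1})/(a_1 ⋯ a_i)` for `i ≥ 1`. -/
noncomputable def bdMu (a b : ℕ → ℝ) (i : ℕ) : ℝ :=
  (∏ k ∈ Finset.range i, b k) / (∏ k ∈ Finset.range i, a (k + 1))

/-- The generator `Q̂_n^{(N)}` of the birth–death chain on `{n,…,N}` absorbed at `n` and
reflected at `N`, restricted to `{n+1,…,N}`.  The index `i : Fin (N - n)` corresponds to the
state `n + 1 + i`. -/
noncomputable def bdMatrixHat (a b : ℕ → ℝ) (n N : ℕ) :
    Matrix (Fin (N - n)) (Fin (N - n)) ℝ :=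
  fun i j =>
    if (j : ℕ) = (i : ℕ) + 1 then b (n + 1 + i)
    else if (i : ℕ) = (j : ℕ) + 1 then a (n + 1 + i)
    else if (i : ℕ) = (j : ℕ) then
      (if n + 1 + (i : ℕ) = N then -(a N) else -(a (n + 1 + i) + b (n + 1 + i)))
    else 0

/-- Partial sums `S(m) = Σ_{k=n}^{m-1} 1/(μ_k b_k)`. -/
noncomputable def bdS (a b : ℕ → ℝ) (n m : ℕ) : ℝ :=
  ∑ k ∈ Finset.Ico n m, 1 / (bdMu a b k * b k)

/-- The Green matrix (candidate inverse of `−Q̂`). -/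
noncomputable def bdG (a b : ℕ → ℝ) (n N : ℕ) :
    Matrix (Fin (N - n)) (Fin (N - n)) ℝ :=
  fun i j => bdMu a b (n + 1 + j) * bdS a b n (min (n + 1 + i) (n + 1 + j))

lemma bdMu_pos (a b : ℕ → ℝ) (ha : ∀ k, 1 ≤ k → 0 < a k) (hb : ∀ k, 0 < b k) (i : ℕ) :
    0 < bdMu a b i :=
  div_pos (Finset.prod_pos fun k _ => hb k)
    (Finset.prod_pos fun k _ => ha _ (by omega))

lemma bdMu_step (a b : ℕ → ℝ) (ha : ∀ k, 1 ≤ k → 0 < a k) (m : ℕ) :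
    bdMu a b (m + 1) * a (m + 1) = bdMu a b m * b m := by
  have h1 : a (m + 1) ≠ 0 := ne_of_gt (ha _ (by omega))
  have hPa : (∏ k ∈ Finset.range m, a (k + 1)) ≠ 0 :=
    ne_of_gt (Finset.prod_pos fun k _ => ha _ (by omega))
  simp only [bdMu, Finset.prod_range_succ]
  field_simp

lemma bdS_succ (a b : ℕ → ℝ) (n m : ℕ) (h : n ≤ m) :
    bdS a b n (m + 1) = bdS a b n m + 1 / (bdMu a b m * b m) :=
  Finset.sum_Ico_succ_top h _

lemma sum_fin_ite {m : ℕ} (c : ℕ) (f : Fin m → ℝ) :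
    (∑ k : Fin m, if (k : ℕ) = c then f k else 0) =
      if h : c < m then f ⟨c, h⟩ else 0 := by
  split_ifs with h
  · rw [Finset.sum_eq_single (⟨c, h⟩ : Fin m)]
    · simp
    · intro k _ hk
      rw [if_neg]
      intro hc
      exact hk (Fin.ext hc)
    · simp
  · apply Finset.sum_eq_zero
    intro k _
    rw [if_neg]
    intro hc
    exact h (hc ▸ k.isLt)

lemma sum_fin_ite' {m : ℕ} (c : ℕ) (f : Fin m → ℝ) :
    (∑ k : Fin m, if c = (k : ℕ) + 1 then f k else 0) =
      if h : c - 1 < m ∧ 1 ≤ c then f ⟨c - 1, h.1⟩ else 0 := by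
  have h1 : ∀ k : Fin m, (if c = (k : ℕ) + 1 then f k else 0) =
      if (k : ℕ) = c - 1 then (if 1 ≤ c then f k else 0) else 0 := by
    intro k
    split_ifs <;> first | rfl | omega
  simp_rw [h1]
  rw [sum_fin_ite]
  split_ifs <;> first | rfl | omega

lemma bd_key (a b : ℕ → ℝ) (ha : ∀ k, 1 ≤ k → 0 < a k) (hb : ∀ k, 0 < b k)
    (n N x y : ℕ) (hx : n + 1 ≤ x) (hxN : x ≤ N) (hy : n + 1 ≤ y) (hyN : y ≤ N) :
    -(a x) * (bdMu a b y * bdS a b n (min (x - 1) y))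
      + (if x = N then a N else a x + b x) * (bdMu a b y * bdS a b n (min x y))
      + (if x = N then 0 else -(b x) * (bdMu a b y * bdS a b n (min (x + 1) y)))
      = if x = y then 1 else 0 := by
  obtain ⟨x', rfl⟩ : ∃ x', x = x' + 1 := ⟨x - 1, by omega⟩
  have hx' : n ≤ x' := by omega
  have hbp := hb x'
  have hmup := bdMu_pos a b ha hb x'
  have hmup1 := bdMu_pos a b ha hb (x' + 1)
  have hbp1 := hb (x' + 1)
  have hap1 := ha (x' + 1) (by omega)
  have hne : bdMu a b x' * b x' ≠ 0 := ne_of_gt (mul_pos hmup hbp)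
  have hstep := bdMu_step a b ha x'
  have key2 : a (x' + 1) * (bdMu a b (x' + 1) * (1 / (bdMu a b x' * b x'))) = 1 := by
    rw [← hstep]
    field_simp
  simp only [Nat.add_sub_cancel]
  rcases lt_trichotomy (x' + 1) y with hlt | heq | hgt
  · -- x < y, hence x ≠ N
    rw [if_neg (by omega : ¬ x' + 1 = y), if_neg (by omega : ¬ x' + 1 = N),
      if_neg (by omega : ¬ x' + 1 = N),
      min_eq_left (by omega), min_eq_left (by omega), min_eq_left (by omega),
      bdS_succ a b n (x' + 1) (by omega), bdS_succ a b n x' hx']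
    have key : a (x' + 1) * (1 / (bdMu a b x' * b x')) =
        b (x' + 1) * (1 / (bdMu a b (x' + 1) * b (x' + 1))) := by
      rw [← hstep]
      field_simp
    linear_combination bdMu a b y * key
  · -- x = y
    subst heq
    rw [if_pos rfl, min_eq_left (by omega : x' ≤ x' + 1), min_self,
      min_eq_right (by omega : x' + 1 ≤ x' + 1 + 1),
      bdS_succ a b n x' hx']
    split_ifs with hN
    · rw [← hN]
      linear_combination key2
    · linear_combination key2
  · -- x > y
    rw [if_neg (by omega : ¬ x' + 1 = y),
      min_eq_right (by omega), min_eq_right (by omega), min_eq_right (by omega)]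
    split_ifs with h
    · rw [← h]; ring
    · ring

lemma bd_mul_eq_one (a b : ℕ → ℝ) (ha : ∀ k, 1 ≤ k → 0 < a k) (hb : ∀ k, 0 < b k)
    (n N : ℕ) (hnN : n < N) :
    (-(bdMatrixHat a b n N)) * bdG a b n N = 1 := by
  ext i j
  rw [Matrix.mul_apply, Matrix.one_apply]
  have hi : n + 1 + (i : ℕ) ≤ N := by have := i.isLt; omega
  have hj : n + 1 + (j : ℕ) ≤ N := by have := j.isLt; omega
  have hsplit : ∀ k : Fin (N - n),
      (-(bdMatrixHat a b n N)) i k * bdG a b n N k j =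
        (if (k : ℕ) = (i : ℕ) + 1 then -(b (n + 1 + (i : ℕ))) * bdG a b n N k j else 0)
        + (if (i : ℕ) = (k : ℕ) + 1 then -(a (n + 1 + (i : ℕ))) * bdG a b n N k j else 0)
        + (if (k : ℕ) = (i : ℕ) then
            (if n + 1 + (i : ℕ) = N then a N
              else a (n + 1 + (i : ℕ)) + b (n + 1 + (i : ℕ))) * bdG a b n N k j
          else 0) := by
    intro k
    simp only [Matrix.neg_apply, bdMatrixHat]
    split_ifs <;> first | omega | ring1
  rw [Finset.sum_congr rfl fun k _ => hsplit k, Finset.sum_add_distrib,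
    Finset.sum_add_distrib, sum_fin_ite, sum_fin_ite', sum_fin_ite]
  have h1 : (if h : (i : ℕ) + 1 < N - n then
        -(b (n + 1 + (i : ℕ))) * bdG a b n N ⟨(i : ℕ) + 1, h⟩ j else 0) =
      (if n + 1 + (i : ℕ) = N then 0
        else -(b (n + 1 + (i : ℕ))) *
          (bdMu a b (n + 1 + (j : ℕ)) *
            bdS a b n (min (n + 1 + (i : ℕ) + 1) (n + 1 + (j : ℕ))))) := by
    split_ifs with h h'
    · omega
    · simp only [bdG]
      have : n + 1 + ((i : ℕ) + 1) = n + 1 + (i : ℕ) + 1 := by omega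
      rw [this]
    · rfl
    · omega
  have h2 : (if h : (i : ℕ) - 1 < N - n ∧ 1 ≤ (i : ℕ) then
        -(a (n + 1 + (i : ℕ))) * bdG a b n N ⟨(i : ℕ) - 1, h.1⟩ j else 0) =
      -(a (n + 1 + (i : ℕ))) *
        (bdMu a b (n + 1 + (j : ℕ)) *
          bdS a b n (min (n + 1 + (i : ℕ) - 1) (n + 1 + (j : ℕ)))) := by
    split_ifs with h
    · simp only [bdG]
      have : n + 1 + ((i : ℕ) - 1) = n + 1 + (i : ℕ) - 1 := by omega
      rw [this]
    · have hi0 : (i : ℕ) = 0 := by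
        have := i.isLt
        omega
      have hmin : min (n + 1 + (i : ℕ) - 1) (n + 1 + (j : ℕ)) = n := by omega
      rw [hmin]
      simp [bdS]
  have h3 : (if h : (i : ℕ) < N - n then
        (if n + 1 + (i : ℕ) = N then a N
          else a (n + 1 + (i : ℕ)) + b (n + 1 + (i : ℕ))) * bdG a b n N ⟨(i : ℕ), h⟩ j
      else 0) =
      (if n + 1 + (i : ℕ) = N then a N
        else a (n + 1 + (i : ℕ)) + b (n + 1 + (i : ℕ))) *
        (bdMu a b (n + 1 + (j : ℕ)) *
          bdS a b n (min (n + 1 + (i : ℕ)) (n + 1 + (j : ℕ)))) := by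
    rw [dif_pos i.isLt]
    rfl
  rw [h1, h2, h3]
  have hij : (if n + 1 + (i : ℕ) = n + 1 + (j : ℕ) then (1 : ℝ) else 0) =
      if i = j then 1 else 0 := by
    have hiff : (n + 1 + (i : ℕ) = n + 1 + (j : ℕ)) ↔ i = j := by
      rw [Fin.ext_iff]; omega
    simp only [hiff]
  rw [← hij]
  linear_combination bd_key a b ha hb n N (n + 1 + (i : ℕ)) (n + 1 + (j : ℕ))
    (by omega) hi (by omega) hj

/-- for `0 ≤ n < N`, the matrix `−Q̂_n^{(N)}` is invertible and the trace of its
inverse (the sum of the reciprocal eigenvalues, i.e. the mean hitting time `E T_{N,n}`)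
equals `Σ_{j=n}^{N} (1/(μ_j b_j)) Σ_{i=j+1}^{N} μ_i`. -/
theorem trace_inverse_eq_mean_hitting_time
    (a b : ℕ → ℝ) (ha : ∀ k, 1 ≤ k → 0 < a k) (hb : ∀ k, 0 < b k)
    (n N : ℕ) (hnN : n < N) :
    IsUnit (-(bdMatrixHat a b n N)).det ∧
    Matrix.trace (-(bdMatrixHat a b n N))⁻¹ =
      ∑ j ∈ Finset.Icc n N,
        (1 / (bdMu a b j * b j)) * ∑ i ∈ Finset.Icc (j + 1) N, bdMu a b i := by
  have hMB := bd_mul_eq_one a b ha hb n N hnN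
  refine ⟨Matrix.isUnit_det_of_right_inverse hMB, ?_⟩
  rw [Matrix.inv_eq_right_inv hMB]
  have htr : Matrix.trace (bdG a b n N) =
      ∑ i : Fin (N - n), bdMu a b (n + 1 + (i : ℕ)) * bdS a b n (n + 1 + (i : ℕ)) := by
    simp [Matrix.trace, Matrix.diag, bdG]
  rw [htr, Fin.sum_univ_eq_sum_range
    (fun i => bdMu a b (n + 1 + i) * bdS a b n (n + 1 + i))]
  have hrange : ∑ i ∈ Finset.range (N - n),
      bdMu a b (n + 1 + i) * bdS a b n (n + 1 + i) =
      ∑ x ∈ Finset.Icc (n + 1) N, bdMu a b x * bdS a b n x := by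
    rw [← Finset.Ico_add_one_right_eq_Icc, Finset.sum_Ico_eq_sum_range]
    have : N + 1 - (n + 1) = N - n := by omega
    rw [this]
  rw [hrange]
  have hswap : ∑ x ∈ Finset.Icc (n + 1) N, bdMu a b x * bdS a b n x =
      ∑ k ∈ Finset.Icc n N, ∑ x ∈ Finset.Icc (k + 1) N,
        bdMu a b x * (1 / (bdMu a b k * b k)) := by
    simp only [bdS, Finset.mul_sum]
    exact Finset.sum_comm' (by
      intro x k
      simp only [Finset.mem_Icc, Finset.mem_Ico]
      omega)
  rw [hswap]
  apply Finset.sum_congr rfl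
  intro k _
  rw [Finset.mul_sum]
  apply Finset.sum_congr rfl
  intro x _
  ring
end

section
/- Fix n ≥ 0. For each N > n, all eigenvalues of −Q̂_n^{(N)} are real; denote them in increasing order by λ̂_{n,1}^{(N)} ≤ ⋯ ≤ λ̂_{n,N−n}^{(N)}. Then for every 1 ≤ ν ≤ N−n, λ̂_{n,ν}^{(N+1)} ≤ λ̂_{n,ν}^{(N)}; that is, the ν-th smallest eigenvalue of −Q̂_n^{(N)} is nonincreasing in N. -/
namespace BDaux

open Matrix Polynomial Finset Module RealInnerProductSpace

/-! ### Generic charpoly lemmas -/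

lemma my_charpoly_conj {R : Type*} [CommRing R] {ι : Type*} [Fintype ι] [DecidableEq ι]
    (P A Q : Matrix ι ι R) (h1 : P * Q = 1) :
    (P * A * Q).charpoly = A.charpoly := by
  unfold Matrix.charpoly
  have hone : (C.mapMatrix P) * (C.mapMatrix Q) = (1 : Matrix ι ι R[X]) := by
    rw [← map_mul (C.mapMatrix : Matrix ι ι R →+* Matrix ι ι R[X]), h1,
      _root_.map_one]
  have hone' : (C.mapMatrix Q) * (C.mapMatrix P) = (1 : Matrix ι ι R[X]) :=
    mul_eq_one_comm.mp hone
  have hc : charmatrix (P * A * Q) = C.mapMatrix P * charmatrix A * C.mapMatrix Q := by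
    unfold charmatrix
    rw [map_mul (C.mapMatrix : Matrix ι ι R →+* Matrix ι ι R[X]),
      map_mul (C.mapMatrix : Matrix ι ι R →+* Matrix ι ι R[X])]
    have hs : (Matrix.scalar ι (X : R[X])) = C.mapMatrix P * Matrix.scalar ι (X : R[X]) * C.mapMatrix Q := by
      have := Matrix.scalar_commute (X : R[X]) (fun r => (Commute.all _ _)) (C.mapMatrix P)
      rw [← this.eq, mul_assoc, hone, mul_one]
    rw [mul_sub, sub_mul, ← hs]
  rw [hc, det_mul, det_mul, mul_comm, ← mul_assoc, ← det_mul, hone']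
  simp

lemma my_charpoly_diagonal {R : Type*} [CommRing R] {ι : Type*} [Fintype ι] [DecidableEq ι]
    (d : ι → R) : (Matrix.diagonal d).charpoly = ∏ i, (X - C (d i)) := by
  unfold Matrix.charpoly charmatrix
  have : (scalar ι) (X : R[X]) - C.mapMatrix (diagonal d)
      = diagonal (fun i => X - C (d i)) := by
    rw [RingHom.mapMatrix_apply, Matrix.diagonal_map (map_zero C)]
    rw [Matrix.scalar, ← Matrix.diagonal_sub]
    congr
  rw [this, det_diagonal]

lemma my_charpoly_hermitian {ι : Type*} [Fintype ι] [DecidableEq ι]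
    {A : Matrix ι ι ℝ} (hA : A.IsHermitian) :
    A.charpoly = ∏ i, (X - C (hA.eigenvalues i)) := by
  have hU : (hA.eigenvectorUnitary : Matrix ι ι ℝ) * (star hA.eigenvectorUnitary : Matrix ι ι ℝ) = 1 := by
    simpa using (Matrix.mem_unitaryGroup_iff.mp hA.eigenvectorUnitary.2)
  calc A.charpoly
      = ((hA.eigenvectorUnitary : Matrix ι ι ℝ) * diagonal (RCLike.ofReal ∘ hA.eigenvalues)
          * (star hA.eigenvectorUnitary : Matrix ι ι ℝ)).charpoly := by
        rw [← Unitary.conjStarAlgAut_apply (S := ℝ), ← hA.spectral_theorem]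
    _ = (diagonal (RCLike.ofReal ∘ hA.eigenvalues)).charpoly := my_charpoly_conj _ _ _ hU
    _ = ∏ i, (X - C (hA.eigenvalues i)) := by
        rw [my_charpoly_diagonal]
        congr 1

/-! ### Multiset counting lemmas -/

lemma my_multiset_eq {ι κ : Type*} [Fintype ι] [Fintype κ] (f : ι → ℝ) (g : κ → ℝ)
    (h : ∏ i, (X - C (f i)) = ∏ k, (X - C (g k))) :
    (Finset.univ.val.map f) = (Finset.univ.val.map g) := by
  have h1 : ((Finset.univ.val.map f).map fun r => X - C r).prod
      = ((Finset.univ.val.map g).map fun r => X - C r).prod := by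
    rw [Multiset.map_map, Multiset.map_map]
    exact h
  have := congrArg Polynomial.roots h1
  rwa [roots_multiset_prod_X_sub_C, roots_multiset_prod_X_sub_C] at this

lemma my_count_eq {ι κ : Type*} [Fintype ι] [Fintype κ] (f : ι → ℝ) (g : κ → ℝ)
    (h : (Finset.univ.val.map f) = (Finset.univ.val.map g)) (t : ℝ) :
    (Finset.univ.filter fun i => f i ≤ t).card = (Finset.univ.filter fun k => g k ≤ t).card := by
  have h1 := congrArg (Multiset.countP (fun x => x ≤ t)) h
  rw [Multiset.countP_map, Multiset.countP_map] at h1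
  exact h1

lemma my_mem_of_mem {ι κ : Type*} [Fintype ι] [Fintype κ] (f : ι → ℝ) (g : κ → ℝ)
    (h : (Finset.univ.val.map f) = (Finset.univ.val.map g)) (i : ι) : ∃ k, g k = f i := by
  have : f i ∈ Finset.univ.val.map g := by
    rw [← h]; exact Multiset.mem_map_of_mem f (Finset.mem_univ_val i)
  obtain ⟨k, -, hk⟩ := Multiset.mem_map.mp this
  exact ⟨k, hk⟩

lemma my_mono_le {m : ℕ} (f : Fin m → ℝ) (hf : Monotone f) (v : ℕ) (hv : v < m) (t : ℝ)
    (h : v + 1 ≤ (Finset.univ.filter fun j => f j ≤ t).card) : f ⟨v, hv⟩ ≤ t := by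
  by_contra hlt
  push_neg at hlt
  have hsub : (Finset.univ.filter fun j : Fin m => f j ≤ t) ⊆
      Finset.univ.filter fun j : Fin m => (j : ℕ) < v := by
    intro j hj
    simp only [Finset.mem_filter, Finset.mem_univ, true_and] at hj ⊢
    by_contra hge
    push_neg at hge
    exact absurd (hf (show (⟨v, hv⟩ : Fin m) ≤ j from hge))
      (not_le.mpr (lt_of_le_of_lt hj hlt))
  have hcard : (Finset.univ.filter fun j : Fin m => (j : ℕ) < v).card ≤ v := by
    have h2 : (Finset.univ.filter fun j : Fin m => (j : ℕ) < v).card ≤ (Finset.range v).card := by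
      refine Finset.card_le_card_of_injOn (fun j => (j : ℕ)) ?_ ?_
      · intro j hj
        simp only [Finset.mem_coe, Finset.mem_filter] at hj
        exact Finset.mem_range.mpr hj.2
      · intro x _ y _ hxy
        exact Fin.ext hxy
    simpa using h2
  have h3 := Finset.card_le_card hsub
  omega

/-! ### Spectral quadratic form machinery -/

variable {ι : Type*} [Fintype ι] [DecidableEq ι]

lemma my_inner_eq (x y : EuclideanSpace ℝ ι) : ⟪x, y⟫ = ∑ i, x i * y i := by
  simp [PiLp.inner_apply, mul_comm]

lemma my_lin_apply (A : Matrix ι ι ℝ) (x : EuclideanSpace ℝ ι) (i : ι) :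
    Matrix.toEuclideanLin A x i = ∑ j, A i j * x j := by
  simp [Matrix.toEuclideanLin_apply, Matrix.mulVec, dotProduct]

lemma my_quad_eq_sum (A : Matrix ι ι ℝ) (x : EuclideanSpace ℝ ι) :
    ⟪x, Matrix.toEuclideanLin A x⟫ = ∑ i, x i * ∑ j, A i j * x j := by
  rw [my_inner_eq]
  exact Finset.sum_congr rfl fun i _ => by rw [my_lin_apply]

lemma my_lin_basis {A : Matrix ι ι ℝ} (hA : A.IsHermitian) (j : ι) :
    Matrix.toEuclideanLin A (hA.eigenvectorBasis j) =
      hA.eigenvalues j • hA.eigenvectorBasis j := by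
  have h := hA.mulVec_eigenvectorBasis j
  apply PiLp.ext
  intro i
  have := congrFun h i
  simpa [my_lin_apply, Matrix.mulVec, dotProduct] using this

lemma my_lin_expand {A : Matrix ι ι ℝ} (hA : A.IsHermitian) (x : EuclideanSpace ℝ ι) :
    Matrix.toEuclideanLin A x
      = ∑ j, (hA.eigenvalues j * hA.eigenvectorBasis.repr x j) • hA.eigenvectorBasis j := by
  conv_lhs => rw [← hA.eigenvectorBasis.sum_repr x]
  rw [map_sum]
  refine Finset.sum_congr rfl fun j _ => ?_
  rw [LinearMap.map_smul, my_lin_basis hA j, smul_smul, mul_comm]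

lemma my_quad_expand {A : Matrix ι ι ℝ} (hA : A.IsHermitian) (x : EuclideanSpace ℝ ι) :
    ⟪x, Matrix.toEuclideanLin A x⟫
      = ∑ j, hA.eigenvalues j * (hA.eigenvectorBasis.repr x j)^2 := by
  rw [my_lin_expand hA x, inner_sum]
  refine Finset.sum_congr rfl fun j _ => ?_
  rw [real_inner_smul_right, real_inner_comm, ← hA.eigenvectorBasis.repr_apply_apply]
  ring

lemma my_norm_expand (B : OrthonormalBasis ι ℝ (EuclideanSpace ℝ ι)) (x : EuclideanSpace ℝ ι) :
    ⟪x, x⟫ = ∑ j, (B.repr x j)^2 := by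
  nth_rewrite 2 [← B.sum_repr x]
  rw [inner_sum]
  refine Finset.sum_congr rfl fun j _ => ?_
  rw [real_inner_smul_right, real_inner_comm, ← B.repr_apply_apply]
  ring

lemma my_repr_vanish (B : OrthonormalBasis ι ℝ (EuclideanSpace ℝ ι)) (s : Finset ι)
    (x : EuclideanSpace ℝ ι) (hx : x ∈ Submodule.span ℝ (B '' ↑s)) (j : ι) (hj : j ∉ s) :
    B.repr x j = 0 := by
  set f : EuclideanSpace ℝ ι →ₗ[ℝ] ℝ :=
    (EuclideanSpace.projₗ j).comp ((B.repr.toLinearEquiv : EuclideanSpace ℝ ι ≃ₗ[ℝ] EuclideanSpace ℝ ι).toLinearMap) with hf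
  have hker : Submodule.span ℝ (B '' ↑s) ≤ LinearMap.ker f := by
    rw [Submodule.span_le]
    rintro y ⟨i, hi, rfl⟩
    simp only [SetLike.mem_coe, LinearMap.mem_ker, hf, LinearMap.comp_apply, LinearMap.proj_apply]
    have h1 : B.repr (B i) = EuclideanSpace.single i 1 := B.repr_self i
    have h2 : B.repr (B i) j = EuclideanSpace.single i (1:ℝ) j := by rw [h1]
    have h3 : EuclideanSpace.single i (1:ℝ) j = 0 := by
      rw [EuclideanSpace.single_apply]
      simp only [ite_eq_right_iff]
      intro h; exact absurd (h ▸ hi) hj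
    exact h2.trans h3
  exact hker hx

lemma my_finrank_span (B : OrthonormalBasis ι ℝ (EuclideanSpace ℝ ι)) (s : Finset ι) :
    finrank ℝ (Submodule.span ℝ (B '' ↑s)) = s.card := by
  have h1 : (B '' ↑s) = Set.range (fun i : ↥s => B i) := by
    ext y; simp [Set.mem_image, Set.mem_range]
  rw [h1, finrank_span_eq_card]
  · exact Fintype.card_coe s
  · exact (B.orthonormal.comp _ Subtype.val_injective).linearIndependent

/-! ### Courant–Fischer style lemmas -/

lemma my_cf1 {A : Matrix ι ι ℝ} (hA : A.IsHermitian) {t : ℝ} {k : ℕ}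
    (V : Submodule ℝ (EuclideanSpace ℝ ι)) (hVdim : k + 1 ≤ finrank ℝ V)
    (hq : ∀ x ∈ V, ⟪x, Matrix.toEuclideanLin A x⟫ ≤ t * ⟪x, x⟫) :
    k + 1 ≤ (Finset.univ.filter fun i => hA.eigenvalues i ≤ t).card := by
  by_contra hcon
  push_neg at hcon
  set B := hA.eigenvectorBasis
  set s : Finset ι := Finset.univ.filter fun i => ¬ (hA.eigenvalues i ≤ t) with hs
  set W := Submodule.span ℝ (B '' ↑s) with hW
  have hWdim : finrank ℝ W = s.card := my_finrank_span B s
  have hcards : s.card + (Finset.univ.filter fun i => hA.eigenvalues i ≤ t).card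
      = Fintype.card ι := by
    rw [hs, Finset.filter_not, Finset.card_sdiff_of_subset (Finset.filter_subset _ _)]
    have h1 := Finset.card_filter_le (Finset.univ : Finset ι) (fun i => hA.eigenvalues i ≤ t)
    have h2 : (Finset.univ : Finset ι).card = Fintype.card ι := Finset.card_univ
    omega
  have hsum : finrank ℝ (EuclideanSpace ℝ ι) < finrank ℝ V + finrank ℝ W := by
    rw [finrank_euclideanSpace, hWdim]
    omega
  have hinf : 0 < finrank ℝ ↑(V ⊓ W) := by
    have h1 := Submodule.finrank_sup_add_finrank_inf_eq V W
    have h2 : finrank ℝ ↑(V ⊔ W) ≤ finrank ℝ (EuclideanSpace ℝ ι) :=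
      Submodule.finrank_le _
    omega
  obtain ⟨⟨y, hyVW⟩, hy0⟩ := Module.finrank_pos_iff_exists_ne_zero.mp hinf
  have hyne : y ≠ 0 := by
    intro h; apply hy0; exact Subtype.ext h
  have hyV : y ∈ V := hyVW.1
  have hyW : y ∈ W := hyVW.2
  have hvanish : ∀ j, j ∉ s → B.repr y j = 0 := my_repr_vanish B s y hyW
  have hkey : 0 < ∑ j, (hA.eigenvalues j - t) * (B.repr y j)^2 := by
    apply Finset.sum_pos'
    · intro j _
      by_cases hj : j ∈ s
      · have ht : t < hA.eigenvalues j := by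
          simp only [hs, Finset.mem_filter, Finset.mem_univ, true_and, not_le] at hj
          exact hj
        exact mul_nonneg (by linarith) (sq_nonneg _)
      · rw [hvanish j hj]
        simp
    · have hr0 : B.repr y ≠ 0 := by
        intro h
        apply hyne
        have := B.repr.map_eq_zero_iff.mp h
        exact this
      obtain ⟨j, hj⟩ : ∃ j, B.repr y j ≠ 0 := by
        by_contra hc; push_neg at hc; exact hr0 (PiLp.ext hc)
      have hjs : j ∈ s := by
        by_contra hjn
        exact hj (hvanish j hjn)
      refine ⟨j, Finset.mem_univ j, ?_⟩
      have ht : t < hA.eigenvalues j := by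
        simp only [hs, Finset.mem_filter, Finset.mem_univ, true_and, not_le] at hjs
        exact hjs
      have hsq : 0 < (B.repr y j)^2 := (sq_nonneg _).lt_of_ne (Ne.symm (pow_ne_zero 2 hj))
      exact mul_pos (by linarith) hsq
  have hpos : t * ⟪y, y⟫ < ⟪y, Matrix.toEuclideanLin A y⟫ := by
    rw [my_quad_expand hA y, my_norm_expand B y, Finset.mul_sum]
    have hexp : ∑ j, hA.eigenvalues j * (B.repr y j)^2 - ∑ j, t * (B.repr y j)^2
        = ∑ j, (hA.eigenvalues j - t) * (B.repr y j)^2 := by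
      rw [← Finset.sum_sub_distrib]
      exact Finset.sum_congr rfl fun j _ => by ring
    linarith
  exact absurd (hq y hyV) (not_le.mpr hpos)

lemma my_cf2 {S : Matrix ι ι ℝ} (hS : S.IsHermitian) (t : ℝ) :
    ∃ V : Submodule ℝ (EuclideanSpace ℝ ι),
      finrank ℝ V = (Finset.univ.filter fun i => hS.eigenvalues i ≤ t).card ∧
      ∀ x ∈ V, ⟪x, Matrix.toEuclideanLin S x⟫ ≤ t * ⟪x, x⟫ := by
  set B := hS.eigenvectorBasis
  set s : Finset ι := Finset.univ.filter fun i => hS.eigenvalues i ≤ t with hs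
  refine ⟨Submodule.span ℝ (B '' ↑s), my_finrank_span B s, ?_⟩
  intro x hx
  have hvanish := my_repr_vanish B s x hx
  rw [my_quad_expand hS x, my_norm_expand B x, Finset.mul_sum]
  apply Finset.sum_le_sum
  intro j _
  by_cases hj : j ∈ s
  · have : hS.eigenvalues j ≤ t := by
      simp only [hs, Finset.mem_filter, Finset.mem_univ, true_and] at hj
      exact hj
    exact mul_le_mul_of_nonneg_right this (sq_nonneg _)
  · rw [hvanish j hj]
    simp

lemma my_count_mono {κ : Type*} [Fintype κ] [DecidableEq κ]
    {A : Matrix ι ι ℝ} {S : Matrix κ κ ℝ} (hA : A.IsHermitian) (hS : S.IsHermitian)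
    (J : EuclideanSpace ℝ κ →ₗ[ℝ] EuclideanSpace ℝ ι) (hJ : Function.Injective J)
    (hquad : ∀ x, ⟪J x, Matrix.toEuclideanLin A (J x)⟫ = ⟪x, Matrix.toEuclideanLin S x⟫)
    (hnorm : ∀ x : EuclideanSpace ℝ κ, ⟪x, x⟫ ≤ ⟪J x, J x⟫)
    {t : ℝ} (ht : 0 ≤ t) :
    (Finset.univ.filter fun i => hS.eigenvalues i ≤ t).card
      ≤ (Finset.univ.filter fun i => hA.eigenvalues i ≤ t).card := by
  obtain ⟨V, hVdim, hVq⟩ := my_cf2 hS t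
  set k := (Finset.univ.filter fun i => hS.eigenvalues i ≤ t).card with hk
  rcases Nat.eq_zero_or_pos k with h0 | hpos
  · omega
  have hk1 : (k - 1) + 1 = k := by omega
  have hmapdim : finrank ℝ (V.map J) = k := by
    rw [← hVdim]
    exact (Submodule.equivMapOfInjective J hJ V).finrank_eq.symm
  have := my_cf1 (t := t) hA (V.map J) (k := k - 1) (by omega) ?_
  · omega
  · rintro y ⟨x, hxV, rfl⟩
    calc ⟪J x, Matrix.toEuclideanLin A (J x)⟫ = ⟪x, Matrix.toEuclideanLin S x⟫ := hquad x
      _ ≤ t * ⟪x, x⟫ := hVq x hxV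
      _ ≤ t * ⟪J x, J x⟫ := mul_le_mul_of_nonneg_left (hnorm x) ht

/-! ### Concrete matrices -/

noncomputable def Tmat (a b : ℕ → ℝ) (n p : ℕ) : Matrix (Fin p) (Fin p) ℝ :=
  fun i j =>
    if (j : ℕ) = (i : ℕ) + 1 then -Real.sqrt (a (n+2+(i:ℕ)) * b (n+1+(i:ℕ)))
    else if (i : ℕ) = (j : ℕ) + 1 then -Real.sqrt (a (n+2+(j:ℕ)) * b (n+1+(j:ℕ)))
    else if (i : ℕ) = (j : ℕ) then
      (if (i:ℕ) + 1 = p then a (n+1+(i:ℕ)) else a (n+1+(i:ℕ)) + b (n+1+(i:ℕ)))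
    else 0

noncomputable def Mmat (a b : ℕ → ℝ) (n p : ℕ) : Matrix (Fin p) (Fin p) ℝ :=
  fun i t =>
    if (t:ℕ) + 1 = (i:ℕ) then Real.sqrt (b (n+(i:ℕ)))
    else if (t:ℕ) = (i:ℕ) then -Real.sqrt (a (n+1+(i:ℕ)))
    else 0

lemma fin_sum_ite (p : ℕ) (c : ℕ) (g : Fin p → ℝ) :
    ∑ i : Fin p, (if c = (i:ℕ) then g i else 0) = if h : c < p then g ⟨c, h⟩ else 0 := by
  split_ifs with h
  · have heq : ∀ i : Fin p, (if c = (i:ℕ) then g i else 0)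
        = (if (⟨c, h⟩ : Fin p) = i then g i else 0) := fun i =>
      if_congr ⟨fun hc => Fin.ext hc, fun hc => congrArg Fin.val hc⟩ rfl rfl
    rw [Finset.sum_congr rfl fun i _ => heq i]
    exact Fintype.sum_ite_eq _ g
  · apply Finset.sum_eq_zero
    intro i _
    rw [if_neg]
    intro hc
    exact h (hc ▸ i.isLt)

lemma Tmat_eq_MtM (a b : ℕ → ℝ) (ha : ∀ k, 1 ≤ k → 0 < a k) (hb : ∀ k, 0 < b k)
    (n p : ℕ) : Tmat a b n p = (Mmat a b n p)ᵀ * (Mmat a b n p) := by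
  have ha1 : ∀ k, (0:ℝ) ≤ a (n+1+k) := fun k => (ha _ (by omega)).le
  have ha2 : ∀ k, (0:ℝ) ≤ a (n+2+k) := fun k => (ha _ (by omega)).le
  have hb' : ∀ k, (0:ℝ) ≤ b k := fun k => (hb k).le
  funext s t
  rw [Matrix.mul_apply]
  simp only [Matrix.transpose_apply]
  rcases Nat.lt_trichotomy (s:ℕ) (t:ℕ) with hst | hst | hst
  · rcases Nat.eq_or_lt_of_le hst with heq | hlt
    · have hsum : ∀ i : Fin p, Mmat a b n p i s * Mmat a b n p i t
          = (if (t:ℕ) = (i:ℕ) then -(Real.sqrt (b (n+(i:ℕ))) * Real.sqrt (a (n+1+(i:ℕ)))) else 0) := by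
        intro i
        unfold Mmat
        split_ifs <;> first | (exfalso; omega) | ring1
      rw [Finset.sum_congr rfl fun i _ => hsum i, fin_sum_ite, dif_pos t.isLt]
      simp only [Fin.val_mk]
      unfold Tmat
      rw [if_pos (show (t:ℕ) = (s:ℕ)+1 by omega)]
      rw [Real.sqrt_mul (ha2 (s:ℕ))]
      have e1 : n+2+(s:ℕ) = n+1+(t:ℕ) := by omega
      have e2 : n+1+(s:ℕ) = n+(t:ℕ) := by omega
      rw [e1, e2]; ring1
    · have hsum : ∀ i : Fin p, Mmat a b n p i s * Mmat a b n p i t = 0 := by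
        intro i
        unfold Mmat
        split_ifs <;> first | (exfalso; omega) | ring1
      rw [Finset.sum_congr rfl fun i _ => hsum i, Finset.sum_const_zero]
      unfold Tmat
      rw [if_neg (by omega), if_neg (by omega), if_neg (by omega)]
  · have hsum : ∀ i : Fin p, Mmat a b n p i s * Mmat a b n p i t
        = (if (t:ℕ)+1 = (i:ℕ) then Real.sqrt (b (n+(i:ℕ))) * Real.sqrt (b (n+(i:ℕ))) else 0)
          + (if (t:ℕ) = (i:ℕ) then Real.sqrt (a (n+1+(i:ℕ))) * Real.sqrt (a (n+1+(i:ℕ))) else 0) := by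
      intro i
      unfold Mmat
      split_ifs <;> first | (exfalso; omega) | ring1
    rw [Finset.sum_congr rfl fun i _ => hsum i, Finset.sum_add_distrib,
      fin_sum_ite p ((t:ℕ)+1) _, fin_sum_ite p (t:ℕ) _, dif_pos t.isLt]
    simp only [Fin.val_mk]
    rw [Real.mul_self_sqrt (ha1 (t:ℕ))]
    unfold Tmat
    rw [if_neg (by omega), if_neg (by omega), if_pos hst]
    split_ifs with hc hd
    · exfalso; omega
    · rw [hst, zero_add]
    · rw [Real.mul_self_sqrt (hb' _)]
      have e2 : n+((t:ℕ)+1) = n+1+(t:ℕ) := by omega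
      rw [hst, e2]; ring1
    · exfalso; omega
  · rcases Nat.eq_or_lt_of_le hst with heq | hlt
    · have hsum : ∀ i : Fin p, Mmat a b n p i s * Mmat a b n p i t
          = (if (s:ℕ) = (i:ℕ) then -(Real.sqrt (b (n+(i:ℕ))) * Real.sqrt (a (n+1+(i:ℕ)))) else 0) := by
        intro i
        unfold Mmat
        split_ifs <;> first | (exfalso; omega) | ring1
      rw [Finset.sum_congr rfl fun i _ => hsum i, fin_sum_ite, dif_pos s.isLt]
      simp only [Fin.val_mk]
      unfold Tmat
      rw [if_neg (by omega), if_pos (show (s:ℕ) = (t:ℕ)+1 by omega)]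
      rw [Real.sqrt_mul (ha2 (t:ℕ))]
      have e1 : n+2+(t:ℕ) = n+1+(s:ℕ) := by omega
      have e2 : n+1+(t:ℕ) = n+(s:ℕ) := by omega
      rw [e1, e2]; ring1
    · have hsum : ∀ i : Fin p, Mmat a b n p i s * Mmat a b n p i t = 0 := by
        intro i
        unfold Mmat
        split_ifs <;> first | (exfalso; omega) | ring1
      rw [Finset.sum_congr rfl fun i _ => hsum i, Finset.sum_const_zero]
      unfold Tmat
      rw [if_neg (by omega), if_neg (by omega), if_neg (by omega)]

lemma Tmat_posSemidef (a b : ℕ → ℝ) (ha : ∀ k, 1 ≤ k → 0 < a k) (hb : ∀ k, 0 < b k)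
    (n p : ℕ) : (Tmat a b n p).PosSemidef := by
  rw [Tmat_eq_MtM a b ha hb n p]
  have : (Mmat a b n p)ᵀ = (Mmat a b n p)ᴴ := by
    rw [Matrix.conjTranspose]
    funext i j
    simp [Matrix.transpose_apply]
  rw [this]
  exact Matrix.posSemidef_conjTranspose_mul_self _

/-! ### Conjugation of `bdMatrixHat` to `Tmat` -/

lemma sqrt_id1 {A B : ℝ} (hA : 0 < A) (hB : 0 < B) :
    Real.sqrt (A * B) * Real.sqrt (B / A) = B := by
  rw [← Real.sqrt_mul (mul_pos hA hB).le]
  have : A * B * (B / A) = B ^ 2 := by field_simp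
  rw [this, Real.sqrt_sq hB.le]

lemma sqrt_id2 {A B : ℝ} (hA : 0 < A) :
    A * Real.sqrt (B / A) = Real.sqrt (A * B) := by
  have h1 : A * Real.sqrt (B / A) = Real.sqrt (A^2 * (B / A)) := by
    rw [Real.sqrt_mul (sq_nonneg A), Real.sqrt_sq hA.le]
  rw [h1]
  congr 1
  field_simp

noncomputable def dvec (a b : ℕ → ℝ) (n : ℕ) (p : ℕ) : Fin p → ℝ :=
  fun i => ∏ j ∈ Finset.range (i:ℕ), Real.sqrt (b (n+1+j) / a (n+2+j))

lemma dvec_pos (a b : ℕ → ℝ) (ha : ∀ k, 1 ≤ k → 0 < a k) (hb : ∀ k, 0 < b k)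
    (n p : ℕ) (i : Fin p) : 0 < dvec a b n p i := by
  apply Finset.prod_pos
  intro j _
  exact Real.sqrt_pos.mpr (div_pos (hb _) (ha _ (by omega)))

lemma dvec_succ (a b : ℕ → ℝ) (n p : ℕ) (i j : Fin p) (hij : (j:ℕ) = (i:ℕ) + 1) :
    dvec a b n p j = dvec a b n p i * Real.sqrt (b (n+1+(i:ℕ)) / a (n+2+(i:ℕ))) := by
  unfold dvec
  rw [hij, Finset.prod_range_succ]

lemma conj_eq (a b : ℕ → ℝ) (ha : ∀ k, 1 ≤ k → 0 < a k) (hb : ∀ k, 0 < b k)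
    (n N : ℕ) (hN : n < N) :
    Matrix.diagonal (dvec a b n (N-n)) * (-(bdMatrixHat a b n N))
      = Tmat a b n (N-n) * Matrix.diagonal (dvec a b n (N-n)) := by
  funext i j
  rw [Matrix.diagonal_mul, Matrix.mul_diagonal, Matrix.neg_apply]
  unfold bdMatrixHat Tmat
  by_cases h1 : (j:ℕ) = (i:ℕ) + 1
  · rw [if_pos h1, if_pos h1, dvec_succ a b n _ i j h1]
    have hs := sqrt_id1 (A := a (n+2+(i:ℕ))) (B := b (n+1+(i:ℕ))) (ha _ (by omega)) (hb _)
    linear_combination (dvec a b n (N-n) i) * hs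
  · rw [if_neg h1, if_neg h1]
    by_cases h2 : (i:ℕ) = (j:ℕ) + 1
    · rw [if_pos h2, if_pos h2, dvec_succ a b n _ j i h2]
      have e1 : n+1+(i:ℕ) = n+2+(j:ℕ) := by omega
      rw [e1]
      have hs := sqrt_id2 (A := a (n+2+(j:ℕ))) (B := b (n+1+(j:ℕ))) (ha _ (by omega))
      linear_combination (-(dvec a b n (N-n) j)) * hs
    · rw [if_neg h2, if_neg h2]
      by_cases h3 : (i:ℕ) = (j:ℕ)
      · rw [if_pos h3, if_pos h3]
        have hdij : dvec a b n (N-n) i = dvec a b n (N-n) j := by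
          unfold dvec; rw [h3]
        by_cases h4 : n + 1 + (i:ℕ) = N
        · rw [if_pos h4, if_pos (show (i:ℕ) + 1 = N - n by omega)]
          have : a N = a (n+1+(i:ℕ)) := by rw [h4]
          rw [this, hdij]
          ring
        · rw [if_neg h4, if_neg (by omega)]
          rw [hdij]
          ring
      · rw [if_neg h3, if_neg h3]
        simp

lemma charpoly_bd_eq_T (a b : ℕ → ℝ) (ha : ∀ k, 1 ≤ k → 0 < a k) (hb : ∀ k, 0 < b k)
    (n N : ℕ) (hN : n < N) :
    (-(bdMatrixHat a b n N)).charpoly = (Tmat a b n (N-n)).charpoly := by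
  set d := dvec a b n (N-n) with hd
  set dinv : Fin (N-n) → ℝ := fun i => (d i)⁻¹ with hdinv
  have hne : ∀ i, d i ≠ 0 := fun i => (dvec_pos a b ha hb n (N-n) i).ne'
  have hPQ : Matrix.diagonal dinv * Matrix.diagonal d = 1 := by
    rw [Matrix.diagonal_mul_diagonal]
    have h1 : (dinv * d) = fun (_ : Fin (N-n)) => (1:ℝ) := by
      funext i
      simp only [Pi.mul_apply, hdinv]
      exact inv_mul_cancel₀ (hne i)
    calc Matrix.diagonal (dinv * d) = Matrix.diagonal (fun _ => (1:ℝ)) := by rw [h1]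
      _ = 1 := Matrix.diagonal_one
  have hbd : -(bdMatrixHat a b n N)
      = Matrix.diagonal dinv * Tmat a b n (N-n) * Matrix.diagonal d := by
    have h1 := conj_eq a b ha hb n N hN
    calc -(bdMatrixHat a b n N)
        = 1 * (-(bdMatrixHat a b n N)) := (one_mul _).symm
      _ = Matrix.diagonal dinv * Matrix.diagonal d * (-(bdMatrixHat a b n N)) := by rw [hPQ]
      _ = Matrix.diagonal dinv * (Matrix.diagonal d * (-(bdMatrixHat a b n N))) := by
          rw [mul_assoc]
      _ = Matrix.diagonal dinv * (Tmat a b n (N-n) * Matrix.diagonal d) := by rw [h1]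
      _ = Matrix.diagonal dinv * Tmat a b n (N-n) * Matrix.diagonal d := by rw [mul_assoc]
  rw [hbd]
  exact my_charpoly_conj _ _ _ hPQ

lemma Tmat_charpoly_congr (a b : ℕ → ℝ) (n q p : ℕ) (h : q = p + 1) :
    (Tmat a b n q).charpoly = (Tmat a b n (p+1)).charpoly := by
  subst h; rfl

/-! ### The extension map J and its properties -/

noncomputable def Jmap (a b : ℕ → ℝ) (n p : ℕ) (hp : 0 < p) :
    EuclideanSpace ℝ (Fin p) →ₗ[ℝ] EuclideanSpace ℝ (Fin (p+1)) where
  toFun x := WithLp.toLp 2 (fun i => if h : (i:ℕ) < p then x ⟨i, h⟩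
    else Real.sqrt (b (n+p) / a (n+p+1)) * x ⟨p-1, by omega⟩)
  map_add' x y := by
    ext i
    by_cases h : (i:ℕ) < p <;> simp [h] <;> ring
  map_smul' r x := by
    ext i
    by_cases h : (i:ℕ) < p <;> simp [h] <;> ring

section JW
variable (a b : ℕ → ℝ) (n p : ℕ) (hp : 0 < p)

lemma Jmap_castSucc (x : EuclideanSpace ℝ (Fin p)) (i : Fin p) :
    Jmap a b n p hp x i.castSucc = x i := by
  show (if h : ((i.castSucc : Fin (p+1)):ℕ) < p then x.ofLp ⟨i.castSucc, h⟩ else _) = _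
  rw [dif_pos (by simp [Fin.coe_castSucc, i.isLt])]
  rfl

lemma Jmap_last (x : EuclideanSpace ℝ (Fin p)) :
    Jmap a b n p hp x (Fin.last p)
      = Real.sqrt (b (n+p) / a (n+p+1)) * x ⟨p-1, by omega⟩ := by
  show (if h : ((Fin.last p : Fin (p+1)):ℕ) < p then x.ofLp ⟨Fin.last p, h⟩ else _) = _
  rw [dif_neg (by simp)]

lemma Jmap_inj : Function.Injective (Jmap a b n p hp) := by
  intro x y hxy
  ext i
  have := congrFun (congrArg WithLp.ofLp hxy) i.castSucc
  rwa [Jmap_castSucc, Jmap_castSucc] at this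

def evec : Fin p := ⟨p-1, by omega⟩

lemma E1 (i j : Fin p) :
    Tmat a b n (p+1) i.castSucc j.castSucc
      = Tmat a b n p i j + (if i = evec p hp ∧ j = evec p hp then b (n+p) else 0) := by
  have hev : ((evec p hp) : ℕ) = p - 1 := rfl
  unfold Tmat
  simp only [Fin.coe_castSucc, Fin.ext_iff, hev]
  by_cases h1 : (j:ℕ) = (i:ℕ) + 1
  · rw [if_pos h1, if_pos h1, if_neg (by omega), add_zero]
  · rw [if_neg h1, if_neg h1]
    by_cases h2 : (i:ℕ) = (j:ℕ) + 1
    · rw [if_pos h2, if_pos h2, if_neg (by omega), add_zero]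
    · rw [if_neg h2, if_neg h2]
      by_cases h3 : (i:ℕ) = (j:ℕ)
      · rw [if_pos h3, if_pos h3, if_neg (by omega)]
        by_cases h4 : (i:ℕ) + 1 = p
        · rw [if_pos h4, if_pos (by omega)]
          have hb1 : n + p = n + 1 + (i:ℕ) := by omega
          rw [hb1]
        · rw [if_neg h4, if_neg (by omega), add_zero]
      · rw [if_neg h3, if_neg h3, if_neg (by omega), add_zero]

lemma E2 (i : Fin p) :
    Tmat a b n (p+1) i.castSucc (Fin.last p)
      = (if i = evec p hp then -Real.sqrt (a (n+p+1) * b (n+p)) else 0) := by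
  have hev : ((evec p hp) : ℕ) = p - 1 := rfl
  unfold Tmat
  simp only [Fin.coe_castSucc, Fin.val_last, Fin.ext_iff, hev]
  by_cases h1 : p = (i:ℕ) + 1
  · rw [if_pos h1, if_pos (by omega)]
    have e1 : n+2+(i:ℕ) = n+p+1 := by omega
    have e2 : n+1+(i:ℕ) = n+p := by omega
    rw [e1, e2]
  · rw [if_neg h1, if_neg (by omega), if_neg (by omega), if_neg (by omega)]

lemma E3 (j : Fin p) :
    Tmat a b n (p+1) (Fin.last p) j.castSucc
      = (if j = evec p hp then -Real.sqrt (a (n+p+1) * b (n+p)) else 0) := by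
  have hev : ((evec p hp) : ℕ) = p - 1 := rfl
  unfold Tmat
  simp only [Fin.coe_castSucc, Fin.val_last, Fin.ext_iff, hev]
  rw [if_neg (by omega)]
  by_cases h2 : p = (j:ℕ) + 1
  · rw [if_pos h2, if_pos (by omega)]
    have e1 : n+2+(j:ℕ) = n+p+1 := by omega
    have e2 : n+1+(j:ℕ) = n+p := by omega
    rw [e1, e2]
  · rw [if_neg h2, if_neg (by omega), if_neg (by omega)]

lemma E4 : Tmat a b n (p+1) (Fin.last p) (Fin.last p) = a (n+p+1) := by
  unfold Tmat
  simp only [Fin.val_last]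
  rw [if_neg (by omega), if_neg (by omega)]
  simp only [if_true]
  congr 1
  omega

lemma Jmap_norm (x : EuclideanSpace ℝ (Fin p)) :
    ∑ i, x i * x i ≤ ∑ i, (Jmap a b n p hp x) i * (Jmap a b n p hp x) i := by
  rw [Fin.sum_univ_castSucc]
  simp only [Jmap_castSucc, Jmap_last]
  nlinarith [mul_self_nonneg (Real.sqrt (b (n+p) / a (n+p+1)) * x ⟨p-1, by omega⟩)]

lemma Jmap_quad (ha : ∀ k, 1 ≤ k → 0 < a k) (hb : ∀ k, 0 < b k)
    (x : EuclideanSpace ℝ (Fin p)) :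
    ∑ i, (Jmap a b n p hp x) i * (∑ j, Tmat a b n (p+1) i j * (Jmap a b n p hp x) j)
      = ∑ i, x i * (∑ j, Tmat a b n p i j * x j) := by
  set c := Real.sqrt (b (n+p) / a (n+p+1)) with hc
  set g := Real.sqrt (a (n+p+1) * b (n+p)) with hg
  set e := evec p hp with he
  set y := Jmap a b n p hp x with hy
  have hy1 : ∀ i : Fin p, y i.castSucc = x i := Jmap_castSucc a b n p hp x
  have hy2 : y (Fin.last p) = c * x e := Jmap_last a b n p hp x
  have ha' : 0 < a (n+p+1) := ha _ (by omega)
  have hb' : 0 < b (n+p) := hb _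
  have w1 : ∀ i : Fin p, (∑ j, Tmat a b n (p+1) i.castSucc j * y j)
      = (∑ j, Tmat a b n p i j * x j)
        + (if i = e then b (n+p) * x e + (-g) * (c * x e) else 0) := by
    intro i
    rw [Fin.sum_univ_castSucc]
    have hstep : ∀ j : Fin p, Tmat a b n (p+1) i.castSucc j.castSucc * y j.castSucc
        = Tmat a b n p i j * x j + (if i = e then (if j = e then b (n+p) * x j else 0) else 0) := by
      intro j
      rw [hy1 j, E1 a b n p hp i j]
      by_cases hi : i = e <;> by_cases hj : j = e <;> simp [hi, hj, ← he] <;> ring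
    rw [Finset.sum_congr rfl fun j _ => hstep j, Finset.sum_add_distrib]
    have hite : ∑ j, (if i = e then (if j = e then b (n+p) * x j else 0) else 0)
        = (if i = e then b (n+p) * x e else 0) := by
      by_cases hi : i = e
      · simp only [hi, if_true]
        exact Fintype.sum_ite_eq' e fun j => b (n+p) * x j
      · simp [hi]
    rw [hite, E2 a b n p hp i, hy2]
    by_cases hi : i = e <;> simp [hi, ← he] <;> ring
  have w2 : (∑ j, Tmat a b n (p+1) (Fin.last p) j * y j)
      = (-g) * x e + a (n+p+1) * (c * x e) := by
    rw [Fin.sum_univ_castSucc]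
    have hstep : ∀ j : Fin p, Tmat a b n (p+1) (Fin.last p) j.castSucc * y j.castSucc
        = (if j = e then (-g) * x j else 0) := by
      intro j
      rw [hy1 j, E3 a b n p hp j]
      by_cases hj : j = e <;> simp [hj, ← he, ← hg]
    rw [Finset.sum_congr rfl fun j _ => hstep j, Fintype.sum_ite_eq' e fun j => (-g) * x j,
      E4, hy2]
  rw [Fin.sum_univ_castSucc]
  rw [Finset.sum_congr rfl fun i (_ : i ∈ Finset.univ) => by rw [hy1 i, w1 i]]
  simp only [mul_add]
  rw [Finset.sum_add_distrib, hy2, w2]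
  have hite2 : ∑ i, x i * (if i = e then b (n+p) * x e + (-g) * (c * x e) else 0)
      = x e * (b (n+p) * x e + (-g) * (c * x e)) := by
    have hpt : ∀ i : Fin p, x i * (if i = e then b (n+p) * x e + (-g) * (c * x e) else 0)
        = (if i = e then x i * (b (n+p) * x e + (-g) * (c * x e)) else 0) := by
      intro i; split_ifs <;> ring
    rw [Finset.sum_congr rfl fun i _ => hpt i]
    exact Fintype.sum_ite_eq' e fun i => x i * (b (n+p) * x e + (-g) * (c * x e))
  rw [hite2]
  have hgc : g * c = b (n+p) := sqrt_id1 ha' hb'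
  have hcc : c * c = b (n+p) / a (n+p+1) := Real.mul_self_sqrt (div_nonneg hb'.le ha'.le)
  have ha'cc : a (n+p+1) * (c * c) = b (n+p) := by
    rw [hcc]; field_simp
  linear_combination (x e * x e) * ha'cc - (2 * (x e * x e)) * hgc

end JW

end BDaux

/-- fix `n`. If for each `N > n` the eigenvalues of `-Q̂_n^{(N)}` are all real
and listed in increasing order (with multiplicity) as `lam N`, then the `ν`-th smallest
eigenvalue is nonincreasing in `N`: `λ̂_{n,ν}^{(N+1)} ≤ λ̂_{n,ν}^{(N)}`. -/
theorem eigenvalues_hat_antitone_in_matrix_size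
    (a b : ℕ → ℝ) (ha : ∀ k, 1 ≤ k → 0 < a k) (hb : ∀ k, 0 < b k)
    (n : ℕ)
    (lam : (N : ℕ) → Fin (N - n) → ℝ)
    (hmono : ∀ N, n < N → Monotone (lam N))
    (hchar : ∀ N, n < N → (-(bdMatrixHat a b n N)).charpoly =
      ∏ ν : Fin (N - n), (Polynomial.X - Polynomial.C (lam N ν))) :
    ∀ N, n < N → ∀ ν : Fin (N - n),
      lam (N + 1) (Fin.castLE (by omega) ν) ≤ lam N ν := by
  classical
  intro N hN ν
  have hp : 0 < N - n := by omega
  have hq : N + 1 - n = (N - n) + 1 := by omega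
  have hSpsd := BDaux.Tmat_posSemidef a b ha hb n (N - n)
  have hS := hSpsd.isHermitian
  have hApsd := BDaux.Tmat_posSemidef a b ha hb n ((N - n) + 1)
  have hA := hApsd.isHermitian
  -- multiset identification for size N
  have hm1 : (Finset.univ.val.map (lam N)) = (Finset.univ.val.map hS.eigenvalues) := by
    apply BDaux.my_multiset_eq
    rw [← hchar N hN, BDaux.charpoly_bd_eq_T a b ha hb n N hN,
      BDaux.my_charpoly_hermitian hS]
  -- multiset identification for size N+1
  have hm2 : (Finset.univ.val.map (lam (N+1))) = (Finset.univ.val.map hA.eigenvalues) := by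
    apply BDaux.my_multiset_eq
    rw [← hchar (N+1) (by omega), BDaux.charpoly_bd_eq_T a b ha hb n (N+1) (by omega),
      BDaux.Tmat_charpoly_congr a b n (N+1-n) (N-n) hq,
      BDaux.my_charpoly_hermitian hA]
  set t := lam N ν with htdef
  -- t is nonnegative
  have ht0 : 0 ≤ t := by
    obtain ⟨k, hk⟩ := BDaux.my_mem_of_mem (lam N) hS.eigenvalues hm1 ν
    rw [htdef, ← hk]
    exact hSpsd.eigenvalues_nonneg k
  -- at least ν+1 of the lam N values are ≤ t
  have count1 : (ν:ℕ) + 1 ≤ (Finset.univ.filter fun j => lam N j ≤ t).card := by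
    have h2 : (Finset.range ((ν:ℕ)+1)).card
        ≤ (Finset.univ.filter fun j => lam N j ≤ t).card := by
      refine Finset.card_le_card_of_injOn
        (fun k => (⟨k % (N - n), Nat.mod_lt _ hp⟩ : Fin (N - n))) ?_ ?_
      · intro k hk
        simp only [Finset.mem_coe, Finset.mem_range] at hk
        have hklt : k < N - n := by
          have := ν.isLt
          omega
        simp only [Finset.mem_coe, Finset.mem_filter, Finset.mem_univ, true_and]
        have hle : (⟨k % (N - n), Nat.mod_lt _ hp⟩ : Fin (N - n)) ≤ ν := by
          have : k % (N - n) = k := Nat.mod_eq_of_lt hklt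
          show k % (N - n) ≤ (ν:ℕ)
          omega
        exact hmono N hN hle
      · intro x hx y hy hxy
        simp only [Finset.mem_coe, Finset.mem_range] at hx hy
        have := ν.isLt
        have hxval := congrArg Fin.val hxy
        simp only [Fin.val_mk] at hxval
        rw [Nat.mod_eq_of_lt (by omega), Nat.mod_eq_of_lt (by omega)] at hxval
        exact hxval
    simpa using h2
  -- transfer over to the eigenvalues of Tmat (N-n)
  have count2 : ((Finset.univ.filter fun j => lam N j ≤ t).card : ℕ)
      = (Finset.univ.filter fun i => hS.eigenvalues i ≤ t).card :=
    BDaux.my_count_eq _ _ hm1 t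
  -- the bridge
  have count3 : (Finset.univ.filter fun i => hS.eigenvalues i ≤ t).card
      ≤ (Finset.univ.filter fun i => hA.eigenvalues i ≤ t).card := by
    apply BDaux.my_count_mono hA hS (BDaux.Jmap a b n (N - n) hp)
      (BDaux.Jmap_inj a b n (N - n) hp) ?_ ?_ ht0
    · intro x
      rw [BDaux.my_quad_eq_sum, BDaux.my_quad_eq_sum]
      exact BDaux.Jmap_quad a b n (N - n) hp ha hb x
    · intro x
      rw [BDaux.my_inner_eq, BDaux.my_inner_eq]
      exact BDaux.Jmap_norm a b n (N - n) hp x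
  -- transfer back to lam (N+1)
  have count4 : (Finset.univ.filter fun i => hA.eigenvalues i ≤ t).card
      = (Finset.univ.filter fun j => lam (N+1) j ≤ t).card :=
    (BDaux.my_count_eq _ _ hm2 t).symm
  have hvlt : (ν:ℕ) < N + 1 - n := by
    have := ν.isLt
    omega
  have hfinal := BDaux.my_mono_le (lam (N+1)) (hmono (N+1) (by omega)) (ν:ℕ) hvlt t
    (by omega)
  have hcast : (Fin.castLE (show N - n ≤ N + 1 - n by omega) ν)
      = (⟨(ν:ℕ), hvlt⟩ : Fin (N + 1 - n)) := rfl
  rw [hcast]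
  exact hfinal
end

section
/- For every real θ with 0 ≤ θ < (Σ_{ν=1}^∞ 1/λ_ν)^{−1}, one has E[e^{θT}] ≤ (1 − θ·E[T])^{−1} = (1 − θ Σ_{ν=1}^∞ 1/λ_ν)^{−1}. (Exponential moment bound for a sum of independent exponential random variables, used to bound the tail of the strong stationary time.) -/
open MeasureTheory ProbabilityTheory Real Set Filter Topology in
/-- Weierstrass product inequality. -/
lemma aux_one_sub_sum_le_prod (s : Finset ℕ) (x : ℕ → ℝ) (h0 : ∀ i ∈ s, 0 ≤ x i)
    (h1 : ∀ i ∈ s, x i ≤ 1) : 1 - ∑ i ∈ s, x i ≤ ∏ i ∈ s, (1 - x i) := by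
  induction s using Finset.cons_induction with
  | empty => simp
  | cons a s ha ih =>
    rw [Finset.sum_cons, Finset.prod_cons]
    have h0' : ∀ i ∈ s, 0 ≤ x i := fun i hi => h0 i (Finset.mem_cons_of_mem hi)
    have h1' : ∀ i ∈ s, x i ≤ 1 := fun i hi => h1 i (Finset.mem_cons_of_mem hi)
    have hih := ih h0' h1'
    have ha0 : 0 ≤ x a := h0 a (Finset.mem_cons_self a s)
    have ha1 : x a ≤ 1 := h1 a (Finset.mem_cons_self a s)
    have hs0 : 0 ≤ ∑ i ∈ s, x i := Finset.sum_nonneg h0'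
    have hp0 : 0 ≤ ∏ i ∈ s, (1 - x i) :=
      Finset.prod_nonneg fun i hi => by linarith [h1' i hi]
    nlinarith

open MeasureTheory ProbabilityTheory Real Set Filter Topology in
/-- mgf of the exponential distribution, lintegral form. -/
lemma aux_lintegral_exp_expMeasure {r θ : ℝ} (hr : 0 < r) (hθ : 0 ≤ θ) (hθr : θ < r) :
    ∫⁻ x, ENNReal.ofReal (Real.exp (θ * x)) ∂(expMeasure r)
      = ENNReal.ofReal (r / (r - θ)) := by
  have hb : (0:ℝ) < r - θ := by linarith
  have hpdf : Measurable (exponentialPDF r) :=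
    (measurable_exponentialPDFReal r).ennreal_ofReal
  have hφ : Measurable fun x : ℝ => ENNReal.ofReal (Real.exp (θ * x)) :=
    (Real.measurable_exp.comp (measurable_id.const_mul θ)).ennreal_ofReal
  have hmeq : expMeasure r = volume.withDensity (exponentialPDF r) := rfl
  rw [hmeq, lintegral_withDensity_eq_lintegral_mul _ hpdf hφ]
  have heq : (exponentialPDF r * fun x => ENNReal.ofReal (Real.exp (θ * x)))
      = (Ici (0:ℝ)).indicator fun x => ENNReal.ofReal (r * Real.exp ((θ - r) * x)) := by
    funext x
    simp only [Pi.mul_apply, exponentialPDF_eq]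
    by_cases hx : (0:ℝ) ≤ x
    · rw [if_pos hx, Set.indicator_of_mem (Set.mem_Ici.2 hx),
        ← ENNReal.ofReal_mul (by positivity)]
      congr 1
      rw [mul_assoc, ← Real.exp_add]
      ring_nf
    · rw [if_neg hx, Set.indicator_of_notMem (by simpa using hx)]
      simp
  rw [heq, lintegral_indicator measurableSet_Ici _,
    ← Measure.restrict_congr_set Ioi_ae_eq_Ici]
  have hint : IntegrableOn (fun x => r * Real.exp ((θ - r) * x)) (Ioi (0:ℝ)) := by
    have := (exp_neg_integrableOn_Ioi 0 hb).const_mul r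
    simpa [neg_sub, IntegrableOn] using this
  rw [← ofReal_integral_eq_lintegral_ofReal hint
    (ae_of_all _ fun x => by positivity)]
  congr 1
  rw [MeasureTheory.integral_const_mul]
  have hval : ∫ x in Ioi (0:ℝ), Real.exp ((θ - r) * x) = (r - θ)⁻¹ := by
    have h := integral_comp_mul_left_Ioi (fun x => Real.exp (-x)) 0 hb
    simp only [mul_zero, integral_exp_neg_Ioi_zero, smul_eq_mul, mul_one] at h
    rw [← h]
    congr 1
    funext x
    congr 1
    ring
  rw [hval]
  rw [div_eq_mul_inv]

open scoped ENNReal in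
open MeasureTheory ProbabilityTheory Real Set Filter Topology in
lemma aux_core {Ω : Type*} [MeasurableSpace Ω] (P : Measure Ω) [IsProbabilityMeasure P]
    (lam : ℕ → ℝ) (hpos : ∀ ν, 0 < lam ν)
    (hsum : Summable fun ν => 1 / lam ν)
    (X : ℕ → Ω → ℝ) (hmeas : ∀ ν, Measurable (X ν))
    (hindep : iIndepFun X P)
    (hexp : ∀ ν, Measure.map (X ν) P = expMeasure (lam ν))
    (θ : ℝ) (hθ0 : 0 ≤ θ) (hθlt : θ < (∑' ν : ℕ, 1 / lam ν)⁻¹)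
    (hcase : 0 < θ ∨ ∀ᵐ ω ∂P, (∑' ν : ℕ, ENNReal.ofReal (X ν ω)) < ⊤) :
    ∫⁻ ω,
        (if (∑' ν : ℕ, ENNReal.ofReal (X ν ω)) < ⊤ then
          ENNReal.ofReal
            (Real.exp (θ * (∑' ν : ℕ, ENNReal.ofReal (X ν ω)).toReal))
        else ⊤) ∂P ≤
      ENNReal.ofReal ((1 - θ * ∑' ν : ℕ, 1 / lam ν)⁻¹) := by
  set S : ℝ := ∑' ν : ℕ, 1 / lam ν with hSdef
  have hS0 : 0 < S :=
    Summable.tsum_pos hsum (fun j => (one_div_pos.2 (hpos j)).le) 0 (one_div_pos.2 (hpos 0))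
  have hinv : ∀ ν, 1 / lam ν ≤ S := fun ν =>
    Summable.le_tsum hsum ν fun j _ => (one_div_pos.2 (hpos j)).le
  have hθlam : ∀ ν, θ < lam ν := by
    intro ν
    have h1 : S⁻¹ ≤ (1 / lam ν)⁻¹ := inv_anti₀ (one_div_pos.2 (hpos ν)) (hinv ν)
    have h2 : (1 / lam ν)⁻¹ = lam ν := by rw [one_div, inv_inv]
    exact lt_of_lt_of_le hθlt (h2 ▸ h1)
  have hθS : θ * S < 1 := by
    have := mul_lt_mul_of_pos_right hθlt hS0
    rwa [inv_mul_cancel₀ hS0.ne'] at this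
  have hφm : Measurable fun y : ℝ => ENNReal.ofReal (Real.exp (θ * y)) :=
    (Real.measurable_exp.comp (measurable_id.const_mul θ)).ennreal_ofReal
  set g : ℕ → Ω → ℝ≥0∞ :=
    fun n ω => ENNReal.ofReal (Real.exp (θ * ∑ ν ∈ Finset.range n, X ν ω)) with hgdef
  have hgm : ∀ n, Measurable (g n) := fun n =>
    hφm.comp (Finset.measurable_sum (Finset.range n) fun i _ => hmeas i)
  -- a.e. nonnegativity
  have hXnn : ∀ᵐ ω ∂P, ∀ ν, 0 ≤ X ν ω := by
    rw [ae_all_iff]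
    intro ν
    have hm : P {ω | X ν ω < 0} = (Measure.map (X ν) P) (Iio 0) := by
      rw [Measure.map_apply (hmeas ν) measurableSet_Iio]; rfl
    have hz : P {ω | X ν ω < 0} = 0 := by
      rw [hm, hexp ν,
        show expMeasure (lam ν) = volume.withDensity (exponentialPDF (lam ν)) from rfl,
        withDensity_apply _ measurableSet_Iio,
        lintegral_exponentialPDF_of_nonpos le_rfl]
    rw [ae_iff]
    simpa [not_le] using hz
  -- monotonicity of g in n, given nonnegativity
  have hmono : ∀ ω, (∀ ν, 0 ≤ X ν ω) → Monotone fun n => g n ω := by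
    intro ω hω n m hnm
    apply ENNReal.ofReal_le_ofReal
    apply Real.exp_le_exp.2
    apply mul_le_mul_of_nonneg_left _ hθ0
    exact Finset.sum_le_sum_of_subset_of_nonneg
      (Finset.range_subset_range.2 hnm) fun i _ _ => hω i
  -- identification of the integrand with ⨆ n, g n
  have hfin : ∀ ω, (∀ ν, 0 ≤ X ν ω) → (∑' ν : ℕ, ENNReal.ofReal (X ν ω)) < ⊤ →
      ENNReal.ofReal (Real.exp (θ * (∑' ν : ℕ, ENNReal.ofReal (X ν ω)).toReal))
        = ⨆ n, g n ω := by
    intro ω hω hT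
    have hsumm : Summable fun ν => X ν ω := by
      have h1 := ENNReal.summable_toReal hT.ne
      exact (summable_congr fun ν => ENNReal.toReal_ofReal (hω ν)).mp h1
    have htr : (∑' ν : ℕ, ENNReal.ofReal (X ν ω)).toReal = ∑' ν, X ν ω := by
      rw [ENNReal.tsum_toReal_eq fun ν => ENNReal.ofReal_ne_top]
      exact tsum_congr fun ν => ENNReal.toReal_ofReal (hω ν)
    have htend : Tendsto (fun n => g n ω) atTop
        (𝓝 (ENNReal.ofReal (Real.exp (θ * ∑' ν, X ν ω)))) := by
      have h1 : Tendsto (fun n => ∑ ν ∈ Finset.range n, X ν ω) atTop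
          (𝓝 (∑' ν, X ν ω)) := hsumm.hasSum.tendsto_sum_nat
      have h2 := h1.const_mul θ
      have h3 := (Real.continuous_exp.tendsto _).comp h2
      exact (ENNReal.continuous_ofReal.tendsto _).comp h3
    rw [htr]
    exact tendsto_nhds_unique htend (tendsto_atTop_iSup (hmono ω hω))
  have hae_id : ∀ᵐ ω ∂P,
      (if (∑' ν : ℕ, ENNReal.ofReal (X ν ω)) < ⊤ then
        ENNReal.ofReal
          (Real.exp (θ * (∑' ν : ℕ, ENNReal.ofReal (X ν ω)).toReal))
      else ⊤) = ⨆ n, g n ω := by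
    rcases hcase with hθpos | hTfin
    · filter_upwards [hXnn] with ω hω
      by_cases hT : (∑' ν : ℕ, ENNReal.ofReal (X ν ω)) < ⊤
      · rw [if_pos hT]; exact hfin ω hω hT
      · rw [if_neg hT]
        have hTtop : (∑' ν : ℕ, ENNReal.ofReal (X ν ω)) = ⊤ := by
          simpa [top_le_iff] using not_lt.1 hT
        have hs_mono : Monotone fun n => ∑ ν ∈ Finset.range n, X ν ω :=
          fun n m hnm => Finset.sum_le_sum_of_subset_of_nonneg
            (Finset.range_subset_range.2 hnm) fun i _ _ => hω i
        have hstend : Tendsto (fun n => ∑ ν ∈ Finset.range n, X ν ω) atTop atTop := by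
          rw [tendsto_atTop_atTop]
          intro b
          have hlt : ENNReal.ofReal b < ∑' ν : ℕ, ENNReal.ofReal (X ν ω) := by
            rw [hTtop]; exact ENNReal.ofReal_lt_top
          rw [ENNReal.tsum_eq_iSup_nat, lt_iSup_iff] at hlt
          obtain ⟨N, hN⟩ := hlt
          refine ⟨N, fun n hn => ?_⟩
          rw [← ENNReal.ofReal_sum_of_nonneg fun i _ => hω i] at hN
          have hb : b ≤ ∑ ν ∈ Finset.range N, X ν ω := by
            by_contra hcon
            push_neg at hcon
            exact absurd (ENNReal.ofReal_le_ofReal hcon.le) (not_le.2 hN)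
          exact hb.trans (hs_mono hn)
        have htend : Tendsto (fun n => g n ω) atTop (𝓝 ⊤) :=
          ENNReal.tendsto_ofReal_atTop.comp
            (Real.tendsto_exp_atTop.comp (hstend.const_mul_atTop hθpos))
        exact tendsto_nhds_unique htend (tendsto_atTop_iSup (hmono ω hω))
    · filter_upwards [hXnn, hTfin] with ω hω hT
      rw [if_pos hT]
      exact hfin ω hω hT
  -- key product formula
  have key : ∀ n, ∫⁻ ω, g n ω ∂P
      = ∏ ν ∈ Finset.range n, ENNReal.ofReal (lam ν / (lam ν - θ)) := by
    intro n
    induction n with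
    | zero => simp [hgdef]
    | succ n ih =>
      have hsplit : ∀ ω, g (n + 1) ω
          = g n ω * ENNReal.ofReal (Real.exp (θ * X n ω)) := by
        intro ω
        rw [hgdef]
        dsimp only
        rw [← ENNReal.ofReal_mul (by positivity), ← Real.exp_add,
          Finset.sum_range_succ, mul_add]
      have hind : IndepFun (g n) (fun ω => ENNReal.ofReal (Real.exp (θ * X n ω))) P := by
        have h1 : IndepFun (∑ j ∈ Finset.range n, X j) (X n) P :=
          hindep.indepFun_finsetSum_of_notMem hmeas (by simp)
        have h2 := h1.comp hφm hφm
        have h3 : ((fun y : ℝ => ENNReal.ofReal (Real.exp (θ * y)))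
            ∘ (∑ j ∈ Finset.range n, X j)) = g n := by
          funext ω; simp [hgdef, Finset.sum_apply]
        rwa [h3] at h2
      calc ∫⁻ ω, g (n + 1) ω ∂P
          = ∫⁻ ω, (g n * fun ω => ENNReal.ofReal (Real.exp (θ * X n ω))) ω ∂P :=
            lintegral_congr fun ω => hsplit ω
        _ = (∫⁻ ω, g n ω ∂P) * ∫⁻ ω, ENNReal.ofReal (Real.exp (θ * X n ω)) ∂P :=
            lintegral_mul_eq_lintegral_mul_lintegral_of_indepFun (hgm n)
              (hφm.comp (hmeas n)) hind
        _ = ∏ ν ∈ Finset.range (n + 1), ENNReal.ofReal (lam ν / (lam ν - θ)) := by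
            rw [ih, ← lintegral_map hφm (hmeas n), hexp n,
              aux_lintegral_exp_expMeasure (hpos n) hθ0 (hθlam n),
              Finset.prod_range_succ]
  -- per-n bound
  have hbound : ∀ n, ∏ ν ∈ Finset.range n, ENNReal.ofReal (lam ν / (lam ν - θ))
      ≤ ENNReal.ofReal ((1 - θ * S)⁻¹) := by
    intro n
    have hfacpos : ∀ i, (0:ℝ) < lam i - θ := fun i => by linarith [hθlam i]
    rw [← ENNReal.ofReal_prod_of_nonneg fun i _ => div_nonneg (hpos i).le (hfacpos i).le]
    apply ENNReal.ofReal_le_ofReal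
    have hxS : ∀ i, θ * (1 / lam i) ≤ θ * S := fun i =>
      mul_le_mul_of_nonneg_left (hinv i) hθ0
    have hfac : ∀ i, lam i / (lam i - θ) = (1 - θ * (1 / lam i))⁻¹ := by
      intro i
      have h1 : 1 - θ * (1 / lam i) = (lam i - θ) / lam i := by
        rw [sub_div, div_self (hpos i).ne']
        ring_nf
      rw [h1, inv_div]
    have hsum_le : ∑ ν ∈ Finset.range n, θ * (1 / lam ν) ≤ θ * S := by
      rw [← Finset.mul_sum]
      exact mul_le_mul_of_nonneg_left
        (Summable.sum_le_tsum _ (fun i _ => (one_div_pos.2 (hpos i)).le) hsum) hθ0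
    have hW := aux_one_sub_sum_le_prod (Finset.range n) (fun ν => θ * (1 / lam ν))
      (fun i _ => mul_nonneg hθ0 (one_div_pos.2 (hpos i)).le) (fun i _ => by linarith [hxS i])
    calc ∏ ν ∈ Finset.range n, lam ν / (lam ν - θ)
        = (∏ ν ∈ Finset.range n, (1 - θ * (1 / lam ν)))⁻¹ := by
          rw [← Finset.prod_inv_distrib]
          exact Finset.prod_congr rfl fun i _ => hfac i
      _ ≤ (1 - θ * S)⁻¹ := by
          apply inv_anti₀ (by linarith)
          linarith
  rw [lintegral_congr_ae hae_id,
    lintegral_iSup' (fun n => (hgm n).aemeasurable) (hXnn.mono fun ω hω => hmono ω hω)]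
  exact iSup_le fun n => (key n) ▸ hbound n

open MeasureTheory ProbabilityTheory in
/-- for a sum `T = Σ_ν X_ν` of countably many independent exponential random
variables with rates `λ_ν` having summable reciprocals, and `0 ≤ θ < (Σ_ν 1/λ_ν)⁻¹`, one has
`E[e^{θT}] ≤ (1 − θ·Σ_ν 1/λ_ν)⁻¹` (with `e^{θ·∞} = ∞`). -/
theorem exponential_moment_bound_sum_indep_exponentials
    {Ω : Type*} [MeasurableSpace Ω] (P : Measure Ω) [IsProbabilityMeasure P]
    (lam : ℕ → ℝ) (hpos : ∀ ν, 0 < lam ν)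
    (hsum : Summable fun ν => 1 / lam ν)
    (X : ℕ → Ω → ℝ) (hmeas : ∀ ν, Measurable (X ν))
    (hindep : iIndepFun X P)
    (hexp : ∀ ν, Measure.map (X ν) P = expMeasure (lam ν)) :
    ∀ θ : ℝ, 0 ≤ θ → θ < (∑' ν : ℕ, 1 / lam ν)⁻¹ →
      ∫⁻ ω,
          (if (∑' ν : ℕ, ENNReal.ofReal (X ν ω)) < ⊤ then
            ENNReal.ofReal
              (Real.exp (θ * (∑' ν : ℕ, ENNReal.ofReal (X ν ω)).toReal))
          else ⊤) ∂P ≤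
        ENNReal.ofReal ((1 - θ * ∑' ν : ℕ, 1 / lam ν)⁻¹) := by
  intro θ hθ0 hθlt
  by_cases hθ : 0 < θ
  · exact aux_core P lam hpos hsum X hmeas hindep hexp θ hθ0 hθlt (Or.inl hθ)
  · have hS0 : 0 < ∑' ν : ℕ, 1 / lam ν :=
      Summable.tsum_pos hsum (fun j => (one_div_pos.2 (hpos j)).le) 0 (one_div_pos.2 (hpos 0))
    set θ' : ℝ := (∑' ν : ℕ, 1 / lam ν)⁻¹ / 2 with hθ'def
    have hθ'pos : 0 < θ' := by positivity
    have hθ'lt : θ' < (∑' ν : ℕ, 1 / lam ν)⁻¹ := half_lt_self (by positivity)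
    have hb := aux_core P lam hpos hsum X hmeas hindep hexp θ' hθ'pos.le hθ'lt
      (Or.inl hθ'pos)
    have hTm : Measurable fun ω => ∑' ν : ℕ, ENNReal.ofReal (X ν ω) :=
      Measurable.ennreal_tsum fun ν => (hmeas ν).ennreal_ofReal
    have hFm : Measurable fun ω =>
        (if (∑' ν : ℕ, ENNReal.ofReal (X ν ω)) < ⊤ then
          ENNReal.ofReal
            (Real.exp (θ' * (∑' ν : ℕ, ENNReal.ofReal (X ν ω)).toReal))
        else ⊤) := by
      apply Measurable.ite (measurableSet_lt hTm measurable_const)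
      · exact ((Real.measurable_exp.comp
          ((hTm.ennreal_toReal).const_mul θ')).ennreal_ofReal)
      · exact measurable_const
    have hfin : (∫⁻ ω,
        (if (∑' ν : ℕ, ENNReal.ofReal (X ν ω)) < ⊤ then
          ENNReal.ofReal
            (Real.exp (θ' * (∑' ν : ℕ, ENNReal.ofReal (X ν ω)).toReal))
        else ⊤) ∂P) ≠ ⊤ :=
      (lt_of_le_of_lt hb ENNReal.ofReal_lt_top).ne
    have hT_ae : ∀ᵐ ω ∂P, (∑' ν : ℕ, ENNReal.ofReal (X ν ω)) < ⊤ := by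
      filter_upwards [ae_lt_top hFm hfin] with ω hω
      by_contra hcon
      rw [if_neg hcon] at hω
      exact absurd hω (lt_irrefl ⊤)
    exact aux_core P lam hpos hsum X hmeas hindep hexp θ hθ0 hθlt (Or.inr hT_ae)
end
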